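/- arXiv:1212.6742 — 8 statements merged into one kernel-verified Lean document; each statement's English description precedes it below -/
import Mathlib

section
/- Every Rauzy class of irreducible pairs contains a standard pair; i.e., for every irreducible pair p there is a finite sequence of Rauzy moves (of types 0 and 1) connecting p to a standard pair. -/
/-- A "pair" on a finite alphabet `A`: two bijections (rows) from `A`
to positions `Fin (card A)` (position `i` represents the value `i+1`). -/
structure RPair (A : Type*) [Fintype A] where
  p : Fin 2 → A ≃ Fin (Fintype.card A)

variable {A : Type*} [Fintype A]

/-- The Rauzy move of type `ε`, as a relation: `Q = ε • P`. Row `ε` is fixed;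
in row `1-ε` the last entry is cycled to just after the letter `z` occupying the
last position of row `ε` (0-indexed positions). -/
def Rmove (ε : Fin 2) (P Q : RPair A) : Prop :=
  Q.p ε = P.p ε ∧
  ∀ z : A, ((P.p ε) z).val = Fintype.card A - 1 →
    ∀ b : A, ((Q.p (1 - ε)) b).val =
      if ((P.p (1 - ε)) b).val ≤ ((P.p (1 - ε)) z).val then ((P.p (1 - ε)) b).val
      else if ((P.p (1 - ε)) b).val < Fintype.card A - 1 then ((P.p (1 - ε)) b).val + 1
      else ((P.p (1 - ε)) z).val + 1

/-- A pair is irreducible if its two rows never occupy the first `k` positions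
with the same set of letters, for `0 < k < card A`. -/
def IrreduciblePair (P : RPair A) : Prop :=
  ∀ k : ℕ, 0 < k → k < Fintype.card A →
    {a : A | ((P.p 0) a).val < k} ≠ {a : A | ((P.p 1) a).val < k}

/-- A pair is standard if the first letter of each row is the last letter of the other. -/
def StandardPair (P : RPair A) : Prop :=
  (∀ a : A, ((P.p 0) a).val = 0 → ((P.p 1) a).val = Fintype.card A - 1) ∧
  (∀ z : A, ((P.p 1) z).val = 0 → ((P.p 0) z).val = Fintype.card A - 1)

/-- `Q` is reachable from `P` by finitely many Rauzy moves. -/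
def InRauzyClass (P Q : RPair A) : Prop :=
  Relation.ReflTransGen (fun X Y : RPair A => ∃ ε, Rmove ε X Y) P Q

namespace Rauzy

variable [Nonempty A]
set_option linter.unusedSectionVars false

lemma rpair_ext {P Q : RPair A} (h : P.p = Q.p) : P = Q := by
  cases P; cases Q; cases h; rfl

def lastIdx (A : Type*) [Fintype A] [Nonempty A] : Fin (Fintype.card A) :=
  ⟨Fintype.card A - 1, by have := Fintype.card_pos (α := A); omega⟩

def fv (n m v : ℕ) : ℕ := if v ≤ m then v else if v < n - 1 then v + 1 else m + 1

noncomputable def sig {n : ℕ} (m : Fin n) : Fin n ≃ Fin n :=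
  Equiv.ofBijective
    (fun i => ⟨fv n m.val i.val, by
      have hm := m.isLt; have hi := i.isLt; unfold fv; split_ifs <;> omega⟩)
    (Finite.injective_iff_bijective.mp (by
      intro i j h
      have h' : fv n m.val i.val = fv n m.val j.val := congrArg Fin.val h
      have hm := m.isLt; have hi := i.isLt; have hj := j.isLt
      unfold fv at h'
      split_ifs at h' <;> (apply Fin.ext; omega)))

lemma sig_val {n : ℕ} (m : Fin n) (i : Fin n) : (sig m i).val = fv n m.val i.val := rfl

noncomputable def rmove (ε : Fin 2) (P : RPair A) : RPair A :=
  ⟨fun i => if i = ε then P.p ε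
    else (P.p (1-ε)).trans (sig (P.p (1-ε) ((P.p ε).symm (lastIdx A))))⟩

lemma fin2_cases (ε i : Fin 2) : i = ε ∨ i = 1 - ε := by revert ε i; decide

lemma one_sub_ne (ε : Fin 2) : (1 - ε) ≠ ε := by revert ε; decide

lemma rmove_row_eps (ε : Fin 2) (P : RPair A) : (rmove ε P).p ε = P.p ε := by
  simp [rmove]

lemma rmove_row_other_val (ε : Fin 2) (P : RPair A) (b : A) :
    ((rmove ε P).p (1-ε) b).val =
      fv (Fintype.card A) ((P.p (1-ε) ((P.p ε).symm (lastIdx A))).val) ((P.p (1-ε) b).val) := by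
  simp [rmove, one_sub_ne ε, sig_val]

lemma rmove_spec (ε : Fin 2) (P : RPair A) : Rmove ε P (rmove ε P) := by
  refine ⟨rmove_row_eps ε P, ?_⟩
  intro z hz b
  have hzz : z = (P.p ε).symm (lastIdx A) := by
    apply (P.p ε).injective
    rw [Equiv.apply_symm_apply]
    exact Fin.ext hz
  rw [rmove_row_other_val, hzz, fv]

lemma rmove_eq {ε : Fin 2} {P Q : RPair A} (h : Rmove ε P Q) : Q = rmove ε P := by
  apply rpair_ext
  funext i
  rcases fin2_cases ε i with hi | hi
  · rw [hi, h.1, rmove_row_eps]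
  · subst hi
    apply Equiv.ext
    intro b
    apply Fin.ext
    have hz : ((P.p ε) ((P.p ε).symm (lastIdx A))).val = Fintype.card A - 1 := by
      rw [Equiv.apply_symm_apply]; rfl
    rw [h.2 _ hz b, rmove_row_other_val, fv]

lemma reach_rmove (ε : Fin 2) (P : RPair A) : InRauzyClass P (rmove ε P) :=
  Relation.ReflTransGen.single ⟨ε, rmove_spec ε P⟩

/-- invariant propagation along a Rauzy class -/
lemma reach_invariant {Q₀ : RPair A} {Inv : RPair A → Prop} (h0 : Inv Q₀)
    (hstep : ∀ Y, InRauzyClass Q₀ Y → Inv Y → ∀ ε, Inv (rmove ε Y)) :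
    ∀ Y, InRauzyClass Q₀ Y → Inv Y := by
  intro Y hY
  induction hY with
  | refl => exact h0
  | tail hab hbc ih =>
    obtain ⟨ε, hm⟩ := hbc
    rw [rmove_eq hm]
    exact hstep _ hab ih ε

end Rauzy


namespace Rauzy

open Finset

variable {A : Type*} [Fintype A] [Nonempty A]
set_option linter.unusedSectionVars false

/-- last letter of row 0 -/
noncomputable def zz0 (Y : RPair A) : A := (Y.p 0).symm (lastIdx A)
/-- position in row 1 of the last letter of row 0 -/
noncomputable def m0 (Y : RPair A) : ℕ := (Y.p 1 (zz0 Y)).val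
/-- last letter of row 1 -/
noncomputable def zz1 (Y : RPair A) : A := (Y.p 1).symm (lastIdx A)
/-- position in row 0 of the last letter of row 1 -/
noncomputable def m1 (Y : RPair A) : ℕ := (Y.p 0 (zz1 Y)).val

lemma zz0_val (Y : RPair A) : ((Y.p 0) (zz0 Y)).val = Fintype.card A - 1 := by
  rw [zz0, Equiv.apply_symm_apply]; rfl

lemma zz1_val (Y : RPair A) : ((Y.p 1) (zz1 Y)).val = Fintype.card A - 1 := by
  rw [zz1, Equiv.apply_symm_apply]; rfl

lemma letter_eq {Y : RPair A} {i : Fin 2} {c c' : A}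
    (h : (Y.p i c).val = (Y.p i c').val) : c = c' := (Y.p i).injective (Fin.ext h)

lemma zz0_eq {Y : RPair A} {c : A} (h : ((Y.p 0) c).val = Fintype.card A - 1) :
    zz0 Y = c := letter_eq ((zz0_val Y).trans h.symm)

lemma zz1_eq {Y : RPair A} {c : A} (h : ((Y.p 1) c).val = Fintype.card A - 1) :
    zz1 Y = c := letter_eq ((zz1_val Y).trans h.symm)

lemma one_sub_zero : (1 - 0 : Fin 2) = 1 := by decide
lemma one_sub_one : (1 - 1 : Fin 2) = 0 := by decide

lemma mv0_row0 (Y : RPair A) : (rmove 0 Y).p 0 = Y.p 0 := rmove_row_eps 0 Y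
lemma mv1_row1 (Y : RPair A) : (rmove 1 Y).p 1 = Y.p 1 := rmove_row_eps 1 Y

lemma mv0_row1_val (Y : RPair A) (b : A) :
    ((rmove 0 Y).p 1 b).val = fv (Fintype.card A) (m0 Y) ((Y.p 1 b).val) := by
  have := rmove_row_other_val 0 Y b
  rw [one_sub_zero] at this
  rw [this]; rfl

lemma mv1_row0_val (Y : RPair A) (b : A) :
    ((rmove 1 Y).p 0 b).val = fv (Fintype.card A) (m1 Y) ((Y.p 0 b).val) := by
  have := rmove_row_other_val 1 Y b
  rw [one_sub_one] at this
  rw [this]; rfl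

lemma m0_rmove0 (Y : RPair A) : m0 (rmove 0 Y) = m0 Y := by
  have hz : zz0 (rmove 0 Y) = zz0 Y := by
    unfold zz0; rw [mv0_row0]
  unfold m0
  rw [hz, mv0_row1_val]
  unfold m0 fv
  split_ifs <;> omega

lemma m1_rmove1 (Y : RPair A) : m1 (rmove 1 Y) = m1 Y := by
  have hz : zz1 (rmove 1 Y) = zz1 Y := by
    unfold zz1; rw [mv1_row1]
  unfold m1
  rw [hz, mv1_row0_val]
  unfold m1 fv
  split_ifs <;> omega

/-- Iterating type-0 moves pushes a letter beyond `m0` to the last position of row 1,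
leaving row 0 untouched. -/
lemma climb0 : ∀ (N : ℕ) (P : RPair A) (e : A), m0 P < ((P.p 1) e).val →
    Fintype.card A - 1 - ((P.p 1) e).val ≤ N →
    ∃ Q, InRauzyClass P Q ∧ Q.p 0 = P.p 0 ∧ ((Q.p 1) e).val = Fintype.card A - 1 := by
  intro N
  induction N with
  | zero =>
    intro P e hm hN
    have hlt := ((P.p 1) e).isLt
    exact ⟨P, Relation.ReflTransGen.refl, rfl, by omega⟩
  | succ N ih =>
    intro P e hm hN
    by_cases hend : ((P.p 1) e).val = Fintype.card A - 1
    · exact ⟨P, Relation.ReflTransGen.refl, rfl, hend⟩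
    · have hlt := ((P.p 1) e).isLt
      have hval : ((rmove 0 P).p 1 e).val = ((P.p 1) e).val + 1 := by
        rw [mv0_row1_val]; unfold fv
        rw [if_neg (by omega), if_pos (by omega)]
      obtain ⟨Q, h1, h2, h3⟩ := ih (rmove 0 P) e
        (by rw [m0_rmove0, hval]; omega) (by rw [hval]; omega)
      exact ⟨Q, (reach_rmove 0 P).trans h1, h2.trans (mv0_row0 P), h3⟩

/-- Iterating type-1 moves pushes a letter beyond `m1` to the last position of row 0,
leaving row 1 untouched. -/
lemma tailrot : ∀ (N : ℕ) (P : RPair A) (c : A), m1 P < ((P.p 0) c).val →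
    Fintype.card A - 1 - ((P.p 0) c).val ≤ N →
    ∃ Q, InRauzyClass P Q ∧ Q.p 1 = P.p 1 ∧ ((Q.p 0) c).val = Fintype.card A - 1 := by
  intro N
  induction N with
  | zero =>
    intro P c hm hN
    have hlt := ((P.p 0) c).isLt
    exact ⟨P, Relation.ReflTransGen.refl, rfl, by omega⟩
  | succ N ih =>
    intro P c hm hN
    by_cases hend : ((P.p 0) c).val = Fintype.card A - 1
    · exact ⟨P, Relation.ReflTransGen.refl, rfl, hend⟩
    · have hlt := ((P.p 0) c).isLt
      have hval : ((rmove 1 P).p 0 c).val = ((P.p 0) c).val + 1 := by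
        rw [mv1_row0_val]; unfold fv
        rw [if_neg (by omega), if_pos (by omega)]
      obtain ⟨Q, h1, h2, h3⟩ := ih (rmove 1 P) c
        (by rw [m1_rmove1, hval]; omega) (by rw [hval]; omega)
      exact ⟨Q, (reach_rmove 1 P).trans h1, h2.trans (mv1_row1 P), h3⟩

/-- first letters of the rows are invariant -/
lemma first_invariant {P : RPair A} {i : Fin 2} {c : A} (h : ((P.p i) c).val = 0) :
    ∀ Y, InRauzyClass P Y → ((Y.p i) c).val = 0 := by
  apply reach_invariant (Inv := fun Y => ((Y.p i) c).val = 0) h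
  intro Y _ hY ε
  rcases fin2_cases ε i with hi | hi
  · rw [hi, rmove_row_eps, ← hi, hY]
  · rw [hi, rmove_row_other_val, ← hi, hY]
    unfold fv
    rw [if_pos (Nat.zero_le _)]

/-- Rauzy moves preserve irreducibility. -/
lemma irr_rmove {P : RPair A} (hP : IrreduciblePair P) (ε : Fin 2) :
    IrreduciblePair (rmove ε P) := by
  intro k hk0 hkn h
  set z : A := (P.p ε).symm (lastIdx A) with hzdef
  set m : ℕ := ((P.p (1-ε)) z).val with hmdef
  by_cases hm : k ≤ m
  · have hsets : ∀ i : Fin 2, {a : A | ((rmove ε P).p i a).val < k}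
        = {a : A | ((P.p i) a).val < k} := by
      intro i
      rcases fin2_cases ε i with hi | hi
      · rw [hi]; ext a
        simp only [Set.mem_setOf_eq, rmove_row_eps]
      · rw [hi]; ext a
        simp only [Set.mem_setOf_eq, rmove_row_other_val]
        rw [← hzdef, ← hmdef]
        unfold fv
        split_ifs <;> omega
    rw [hsets 0, hsets 1] at h
    exact hP k hk0 hkn h
  · push_neg at hm
    have hz1 : ((rmove ε P).p (1-ε) z).val = m := by
      rw [rmove_row_other_val, ← hzdef, ← hmdef]
      unfold fv; rw [if_pos le_rfl]
    have hz2 : ((rmove ε P).p ε z).val = Fintype.card A - 1 := by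
      rw [rmove_row_eps, hzdef, Equiv.apply_symm_apply]; rfl
    have hiff := Set.ext_iff.mp h z
    simp only [Set.mem_setOf_eq] at hiff
    have he : ε = 0 ∨ ε = 1 := (by decide : ∀ δ : Fin 2, δ = 0 ∨ δ = 1) ε
    rcases he with he | he <;> subst he
    · rw [one_sub_zero] at hz1
      rw [hz2, hz1] at hiff
      omega
    · rw [one_sub_one] at hz1
      rw [hz2, hz1] at hiff
      omega

lemma card_filter_lt (t : ℕ) (ht : t ≤ Fintype.card A) :
    (Finset.univ.filter fun i : Fin (Fintype.card A) => i.val < t).card = t := by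
  rcases Nat.eq_zero_or_pos t with rfl | hpos
  · simp
  · have key : (Finset.univ.filter fun i : Fin (Fintype.card A) => i.val < t).card
        = (Finset.univ : Finset (Fin t)).card := by
      refine Finset.card_nbij'
        (fun i : Fin (Fintype.card A) => (⟨min i.val (t-1), by omega⟩ : Fin t))
        (fun j : Fin t => (⟨j.val, lt_of_lt_of_le j.isLt ht⟩ : Fin (Fintype.card A)))
        ?_ ?_ ?_ ?_
      · intro a _; exact Finset.mem_univ _
      · intro a _
        simp only [Finset.mem_coe, Finset.mem_filter, Finset.mem_univ, true_and]
        exact a.isLt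
      · intro a ha
        simp only [Finset.mem_coe, Finset.mem_filter, Finset.mem_univ, true_and] at ha
        apply Fin.ext; simp; omega
      · intro a _
        apply Fin.ext
        have := a.isLt
        simp; omega
    rw [key, Finset.card_univ, Fintype.card_fin]

lemma filter_equiv_card (e : A ≃ Fin (Fintype.card A)) (p : Fin (Fintype.card A) → Prop)
    [DecidablePred p] :
    (Finset.univ.filter fun c : A => p (e c)).card = (Finset.univ.filter p).card := by
  apply Finset.card_equiv e
  intro i
  simp

end Rauzy


namespace Rauzy

open Finset

variable {A : Type*} [Fintype A] [Nonempty A]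
set_option linter.unusedSectionVars false

lemma fin2_zero_or_one : ∀ δ : Fin 2, δ = 0 ∨ δ = 1 := by decide

lemma pigeon (e0 e1 : A ≃ Fin (Fintype.card A)) {K g : ℕ} (hgK : g ≤ K) {e' : A}
    (h0 : (e0 e').val = g) (h1 : K < (e1 e').val) :
    ∃ c, (e1 c).val ≤ K ∧ g < (e0 c).val := by
  by_contra hcon
  push_neg at hcon
  have hn : K + 1 ≤ Fintype.card A := by have := (e1 e').isLt; omega
  have hS : (Finset.univ.filter fun c : A => (e1 c).val < K+1).card = K+1 := by
    rw [filter_equiv_card e1 (fun i => i.val < K+1)]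
    exact card_filter_lt (K+1) hn
  have himg : (Finset.univ.filter fun c : A => (e1 c).val < K+1).image e0
      ⊆ Finset.univ.filter (fun i : Fin (Fintype.card A) => i.val < g) := by
    intro i hi
    simp only [Finset.mem_image, Finset.mem_filter, Finset.mem_univ, true_and] at hi ⊢
    obtain ⟨c, hc, rfl⟩ := hi
    have hle := hcon c (by omega)
    have hne : (e0 c).val ≠ g := by
      intro hEq
      have : c = e' := e0.injective (Fin.ext (hEq.trans h0.symm))
      subst this
      omega
    omega
  have hcard := Finset.card_le_card himg
  rw [Finset.card_image_of_injective _ e0.injective, hS,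
    card_filter_lt g (by omega)] at hcard
  omega

lemma stage2 (hA2 : 2 ≤ Fintype.card A) :
    ∀ (N : ℕ) (Q₀ : RPair A) (e : A),
    (∀ Y, InRauzyClass Q₀ Y → IrreduciblePair Y) →
    (∀ Y, InRauzyClass Q₀ Y → ((Y.p 0) e).val = ((Q₀.p 0) e).val) →
    ((Q₀.p 0) e).val < Fintype.card A - 1 →
    (∀ Y, InRauzyClass Q₀ Y → ((Y.p 1) e).val ≠ Fintype.card A - 1) →
    Fintype.card A - 1 - ((Q₀.p 1) e).val ≤ N → False := by
  intro N
  induction N with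
  | zero =>
    intro Q₀ e hirr hg hgd hnr hN
    have := ((Q₀.p 1) e).isLt
    exact hnr Q₀ Relation.ReflTransGen.refl (by omega)
  | succ N ih =>
    intro Q₀ e hirr hg hgd hnr hN
    have hK' : ((Q₀.p 1) e).val < Fintype.card A - 1 :=
      lt_of_le_of_ne (by have := ((Q₀.p 1) e).isLt; omega) (hnr Q₀ Relation.ReflTransGen.refl)
    -- the last letter of row 0 always sits strictly after `e` in row 1
    have zgt : ∀ Y, InRauzyClass Q₀ Y → ((Y.p 1) e).val < m0 Y := by
      intro Y hY
      by_contra hle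
      push_neg at hle
      have hne : zz0 Y ≠ e := by
        intro hEq
        have h1 : ((Y.p 0) e).val = Fintype.card A - 1 := by rw [← hEq]; exact zz0_val Y
        rw [hg Y hY] at h1; omega
      have hlt : m0 Y < ((Y.p 1) e).val := by
        rcases lt_or_eq_of_le hle with h | h
        · exact h
        · exact absurd (letter_eq (Y := Y) (i := 1) h) hne
      obtain ⟨Q, hQr, _, hQe⟩ := climb0 (Fintype.card A) Y e hlt (by omega)
      exact hnr Q (hY.trans hQr) hQe
    -- position of e in row 1 is constant on the class
    have const : ∀ Y, InRauzyClass Q₀ Y → ((Y.p 1) e).val = ((Q₀.p 1) e).val := by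
      apply reach_invariant (Inv := fun Y => ((Y.p 1) e).val = ((Q₀.p 1) e).val) rfl
      intro Y hY hInv ε
      obtain he | he := fin2_zero_or_one ε <;> subst he
      · rw [mv0_row1_val]
        unfold fv
        rw [if_pos (le_of_lt (zgt Y hY))]
        exact hInv
      · rw [mv1_row1]; exact hInv
    -- any letter beyond m1 in row 0 sits strictly after e in row 1
    have tail : ∀ Y, InRauzyClass Q₀ Y → ∀ c : A, m1 Y < ((Y.p 0) c).val →
        ((Q₀.p 1) e).val < ((Y.p 1) c).val := by
      intro Y hY c hc
      obtain ⟨Q, hQr, hQ1, hQc⟩ := tailrot (Fintype.card A) Y c hc (by omega)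
      have hz : zz0 Q = c := zz0_eq hQc
      have hzgt := zgt Q (hY.trans hQr)
      unfold m0 at hzgt
      rw [hz, hQ1] at hzgt
      rw [const Y hY] at hzgt
      exact hzgt
    -- letters at row-1 positions ≤ pos(e) are frozen in both rows
    have H1 : ∀ Y, InRauzyClass Q₀ Y → ∀ c : A, ((Q₀.p 1) c).val ≤ ((Q₀.p 1) e).val →
        ((Y.p 1) c) = ((Q₀.p 1) c) ∧ ((Y.p 0) c) = ((Q₀.p 0) c) := by
      apply reach_invariant
        (Inv := fun Y => ∀ c : A, ((Q₀.p 1) c).val ≤ ((Q₀.p 1) e).val →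
          ((Y.p 1) c) = ((Q₀.p 1) c) ∧ ((Y.p 0) c) = ((Q₀.p 0) c))
        (fun c _ => ⟨rfl, rfl⟩)
      intro Y hY hInv ε c hc
      obtain ⟨h1, h0⟩ := hInv c hc
      have hv1 := congrArg Fin.val h1
      have hv0 := congrArg Fin.val h0
      obtain he | he := fin2_zero_or_one ε <;> subst he
      · refine ⟨?_, ?_⟩
        · apply Fin.ext
          rw [mv0_row1_val]
          have hm := zgt Y hY
          have hcn := const Y hY
          unfold fv
          rw [if_pos (by omega)]
          exact hv1
        · rw [mv0_row0]; exact h0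
      · refine ⟨?_, ?_⟩
        · rw [mv1_row1]; exact h1
        · apply Fin.ext
          rw [mv1_row0_val]
          have hb : ¬ (m1 Y < ((Y.p 0) c).val) := by
            intro hcon
            have := tail Y hY c hcon
            omega
          unfold fv
          rw [if_pos (by omega)]
          exact hv0
    by_cases hA : ∀ c : A, ((Q₀.p 0) c).val ≤ ((Q₀.p 1) e).val → ((Q₀.p 1) c).val ≤ ((Q₀.p 1) e).val
    · -- the first pos(e)+1 letters agree in both rows: contradicts irreducibility
      have hsub : (Finset.univ.filter fun c : A => ((Q₀.p 0) c).val < ((Q₀.p 1) e).val + 1)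
          ⊆ (Finset.univ.filter fun c : A => ((Q₀.p 1) c).val < ((Q₀.p 1) e).val + 1) := by
        intro c hc
        simp only [Finset.mem_filter, Finset.mem_univ, true_and] at hc ⊢
        have := hA c (by omega)
        omega
      have hc0 : (Finset.univ.filter fun c : A =>
          ((Q₀.p 0) c).val < ((Q₀.p 1) e).val + 1).card = ((Q₀.p 1) e).val + 1 := by
        rw [filter_equiv_card (Q₀.p 0) (fun i => i.val < ((Q₀.p 1) e).val + 1)]
        exact card_filter_lt _ (by omega)
      have hc1 : (Finset.univ.filter fun c : A =>
          ((Q₀.p 1) c).val < ((Q₀.p 1) e).val + 1).card = ((Q₀.p 1) e).val + 1 := by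
        rw [filter_equiv_card (Q₀.p 1) (fun i => i.val < ((Q₀.p 1) e).val + 1)]
        exact card_filter_lt _ (by omega)
      have heq := Finset.eq_of_subset_of_card_le hsub (le_of_eq (hc1.trans hc0.symm))
      apply hirr Q₀ Relation.ReflTransGen.refl (((Q₀.p 1) e).val + 1) (by omega) (by omega)
      ext c
      have := Finset.ext_iff.mp heq c
      simp only [Finset.mem_filter, Finset.mem_univ, true_and] at this
      simpa using this
    · push_neg at hA
      obtain ⟨e', he'0, he'1⟩ := hA
      -- pigeonhole: some frozen letter sits in row 0 strictly after e'
      obtain ⟨c₀, hc₀1, hc₀0⟩ := pigeon (Q₀.p 0) (Q₀.p 1) he'0 rfl he'1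
      -- m1 is always > pos0(e')
      have mb : ∀ Y, InRauzyClass Q₀ Y → ((Q₀.p 0) e').val < m1 Y := by
        intro Y hY
        obtain ⟨h1, h0⟩ := H1 Y hY c₀ hc₀1
        have hv1 := congrArg Fin.val h1
        have hv0 := congrArg Fin.val h0
        have hle : ¬ (m1 Y < ((Y.p 0) c₀).val) := by
          intro hcon
          have := tail Y hY c₀ hcon
          omega
        omega
      -- e' is frozen in row 0
      have hg' : ∀ Y, InRauzyClass Q₀ Y → ((Y.p 0) e').val = ((Q₀.p 0) e').val := by
        apply reach_invariant (Inv := fun Y => ((Y.p 0) e').val = ((Q₀.p 0) e').val) rfl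
        intro Y hY hInv ε
        obtain he | he := fin2_zero_or_one ε <;> subst he
        · rw [mv0_row0]; exact hInv
        · rw [mv1_row0_val]
          unfold fv
          rw [if_pos (by have := mb Y hY; omega)]
          exact hInv
      -- e' can never be last in row 1
      have hnr' : ∀ Y, InRauzyClass Q₀ Y → ((Y.p 1) e').val ≠ Fintype.card A - 1 := by
        intro Y hY hcon
        have hz : zz1 Y = e' := zz1_eq hcon
        have hm : m1 Y = ((Q₀.p 0) e').val := by
          unfold m1
          rw [hz]
          exact hg' Y hY
        have := mb Y hY
        omega
      exact ih Q₀ e' hirr hg' (by omega) hnr' (by omega)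

end Rauzy



/-- Every Rauzy class contains a standard pair. -/
theorem every_rauzy_class_contains_standard_pair
    {A : Type*} [Fintype A] (hA : 2 ≤ Fintype.card A)
    (P : RPair A) (hP : IrreduciblePair P) :
    ∃ Q : RPair A, InRauzyClass P Q ∧ StandardPair Q := by

  open Rauzy in
  have hpos : 0 < Fintype.card A := by omega
  haveI : Nonempty A := Fintype.card_pos_iff.mp hpos
  have ha0 : ((P.p 0) ((P.p 0).symm ⟨0, hpos⟩)).val = 0 := by
    rw [Equiv.apply_symm_apply]
  set a := (P.p 0).symm ⟨0, hpos⟩ with hadef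
  have haY : ∀ Y, InRauzyClass P Y → ((Y.p 0) a).val = 0 := Rauzy.first_invariant ha0
  have hirrY : ∀ Y, InRauzyClass P Y → IrreduciblePair Y := by
    apply Rauzy.reach_invariant (Inv := IrreduciblePair) hP
    intro Y _ hY ε
    exact Rauzy.irr_rmove hY ε
  haveI : Finite (RPair A) :=
    Finite.of_injective (fun R => R.p) (fun _ _ h => Rauzy.rpair_ext h)
  haveI : Nonempty {Q // InRauzyClass P Q} := ⟨⟨P, Relation.ReflTransGen.refl⟩⟩
  obtain ⟨⟨Q₀, hQ₀⟩, hmax⟩ :=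
    Finite.exists_max (fun Q : {Q // InRauzyClass P Q} => ((Q.1.p 1) a).val)
  by_cases hk : ((Q₀.p 1) a).val = Fintype.card A - 1
  · -- a is last in row 1: rotate row 0 to bring b to the end
    have hm1 : Rauzy.m1 Q₀ = 0 := by
      unfold Rauzy.m1
      rw [Rauzy.zz1_eq hk]
      exact haY Q₀ hQ₀
    have hb1 : ((Q₀.p 1) ((Q₀.p 1).symm ⟨0, hpos⟩)).val = 0 := by
      rw [Equiv.apply_symm_apply]
    set b := (Q₀.p 1).symm ⟨0, hpos⟩ with hbdef
    have hba : b ≠ a := by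
      intro h
      rw [h] at hb1
      omega
    have hb0 : 0 < ((Q₀.p 0) b).val := by
      by_contra h
      push_neg at h
      have hb' : ((Q₀.p 0) b).val = 0 := by omega
      exact hba (Rauzy.letter_eq (Y := Q₀) (i := 0) (hb'.trans (haY Q₀ hQ₀).symm))
    obtain ⟨Q₁, hr1, hrow1, hbend⟩ :=
      Rauzy.tailrot (Fintype.card A) Q₀ b (by omega) (by omega)
    refine ⟨Q₁, hQ₀.trans hr1, ?_, ?_⟩
    · intro c hc
      have hca : c = a :=
        Rauzy.letter_eq (Y := Q₁) (i := 0) (hc.trans (haY Q₁ (hQ₀.trans hr1)).symm)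
      rw [hca, hrow1]
      exact hk
    · intro c hc
      rw [hrow1] at hc
      have hcb : c = b := Rauzy.letter_eq (Y := Q₀) (i := 1) (hc.trans hb1.symm)
      rw [hcb]
      exact hbend
  · exfalso
    have hk' : ((Q₀.p 1) a).val < Fintype.card A - 1 := by
      have := ((Q₀.p 1) a).isLt
      omega
    apply Rauzy.stage2 hA (Fintype.card A) Q₀ a
    · intro Y hY
      exact hirrY Y (hQ₀.trans hY)
    · intro Y hY
      rw [haY Y (hQ₀.trans hY), haY Q₀ hQ₀]
    · rw [haY Q₀ hQ₀]; omega
    · intro Y hY hcon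
      have := hmax ⟨Y, hQ₀.trans hY⟩
      simp only at this
      omega
    · omega
end

section
/- Each Rauzy move of type ε ∈ {0,1} maps irreducible pairs to irreducible pairs, and for every irreducible pair p and ε ∈ {0,1} there exists k > 0 with ε^k p = p (i.e., the Rauzy move of type ε is a bijection of finite order on its orbit within irreducible pairs). -/
variable {A : Type*} [Fintype A]

/-- `k`-fold iteration of the type-`ε` Rauzy move, as a relation. -/
def RmoveIter {A : Type*} [Fintype A] (ε : Fin 2) : ℕ → RPair A → RPair A → Prop
  | 0 => fun P Q => Q = P
  | (k + 1) => fun P Q => ∃ R, Rmove ε P R ∧ RmoveIter ε k R Q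

def cyc (n m : ℕ) (hm : m < n) : Equiv.Perm (Fin n) where
  toFun i := if _ : i.val ≤ m then i
    else if h2 : i.val < n - 1 then ⟨i.val + 1, by omega⟩
    else ⟨m + 1, by have := i.isLt; omega⟩
  invFun j := if _ : j.val ≤ m then j
    else if _ : j.val = m + 1 then ⟨n - 1, by omega⟩
    else ⟨j.val - 1, by have := j.isLt; omega⟩
  left_inv := by
    intro i
    have hi := i.isLt
    by_cases h1 : i.val ≤ m
    · simp [h1]
    · by_cases h2 : i.val < n - 1
      · simp only [dif_neg h1, dif_pos h2]
        have : ¬ (i.val + 1 ≤ m) := by omega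
        have h3 : ¬ (i.val + 1 = m + 1) := by omega
        simp only [dif_neg this, dif_neg h3]
        apply Fin.ext; simp
      · simp only [dif_neg h1, dif_neg h2]
        have : ¬ (m + 1 ≤ m) := by omega
        simp only [dif_neg this, dif_pos rfl]
        apply Fin.ext; simp; omega
  right_inv := by
    intro j
    have hj := j.isLt
    by_cases h1 : j.val ≤ m
    · simp [h1]
    · by_cases h2 : j.val = m + 1
      · simp only [dif_neg h1, dif_pos h2]
        have h3 : ¬ (n - 1 ≤ m) := by omega
        have h4 : ¬ (n - 1 < n - 1) := by omega
        simp only [dif_neg h3, dif_neg h4]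
        apply Fin.ext; simp; omega
      · simp only [dif_neg h1, dif_neg h2]
        have h3 : ¬ (j.val - 1 ≤ m) := by omega
        have h4 : j.val - 1 < n - 1 := by omega
        simp only [dif_neg h3, dif_pos h4]
        apply Fin.ext; simp; omega

lemma cyc_val (n m : ℕ) (hm : m < n) (i : Fin n) :
    ((cyc n m hm) i).val =
      if i.val ≤ m then i.val else if i.val < n - 1 then i.val + 1 else m + 1 := by
  show (if _ : i.val ≤ m then i
    else if h2 : i.val < n - 1 then (⟨i.val + 1, by omega⟩ : Fin n)
    else ⟨m + 1, by have := i.isLt; omega⟩).val = _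
  split_ifs <;> rfl

lemma one_sub_ne (ε : Fin 2) : (1 - ε) ≠ ε := by fin_cases ε <;> decide

lemma fin2_cases (i ε : Fin 2) : i = ε ∨ i = 1 - ε := by
  fin_cases i <;> fin_cases ε <;> decide

lemma RPair.ext' {P Q : RPair A} (h : P.p = Q.p) : P = Q := by
  cases P; cases Q; simp_all

/-- The letter in the last slot of row ε. -/
def zlet (ε : Fin 2) (P : RPair A) (h : 0 < Fintype.card A) : A :=
  (P.p ε).symm ⟨Fintype.card A - 1, by omega⟩

def move (ε : Fin 2) (P : RPair A) : RPair A :=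
  if h : 0 < Fintype.card A then
    ⟨fun i => if i = ε then P.p ε else
      (P.p (1 - ε)).trans
        (cyc (Fintype.card A) (((P.p (1 - ε)) (zlet ε P h)).val) (Fin.is_lt _))⟩
  else P

lemma move_p_self (ε : Fin 2) (P : RPair A) : (move ε P).p ε = P.p ε := by
  unfold move
  split_ifs with h
  · simp
  · rfl

lemma move_p_other (ε : Fin 2) (P : RPair A) (h : 0 < Fintype.card A) :
    (move ε P).p (1 - ε) = (P.p (1 - ε)).trans
      (cyc (Fintype.card A) (((P.p (1 - ε)) (zlet ε P h)).val) (Fin.is_lt _)) := by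
  unfold move
  rw [dif_pos h]
  simp [one_sub_ne ε]

lemma zlet_spec (ε : Fin 2) (P : RPair A) (h : 0 < Fintype.card A)
    (z : A) (hz : ((P.p ε) z).val = Fintype.card A - 1) : z = zlet ε P h := by
  have : (P.p ε) z = ⟨Fintype.card A - 1, by omega⟩ := Fin.ext hz
  rw [zlet, ← this, Equiv.symm_apply_apply]

lemma rmove_move (ε : Fin 2) (P : RPair A) : Rmove ε P (move ε P) := by
  refine ⟨move_p_self ε P, ?_⟩
  intro z hz b
  have h : 0 < Fintype.card A := Fintype.card_pos_iff.mpr ⟨z⟩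
  rw [zlet_spec ε P h z hz, move_p_other ε P h]
  simp only [Equiv.trans_apply]
  rw [cyc_val]

lemma rmove_eq {ε : Fin 2} {P Q : RPair A} (hQ : Rmove ε P Q) : Q = move ε P := by
  by_cases h : 0 < Fintype.card A
  · apply RPair.ext'
    funext i
    rcases fin2_cases i ε with rfl | rfl
    · rw [hQ.1, move_p_self]
    · apply Equiv.ext
      intro b
      apply Fin.ext
      have hz : ((P.p ε) (zlet ε P h)).val = Fintype.card A - 1 := by
        rw [zlet, Equiv.apply_symm_apply]
      rw [hQ.2 (zlet ε P h) hz b, move_p_other ε P h]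
      simp only [Equiv.trans_apply]
      rw [cyc_val]
  · have hA : IsEmpty A := Fintype.card_eq_zero_iff.mp (by omega)
    have : Q = P := by
      apply RPair.ext'; funext i; apply Equiv.ext; intro a; exact isEmptyElim a
    rw [this]
    apply RPair.ext'; funext i; apply Equiv.ext; intro a; exact isEmptyElim a

lemma cyc_congr {n m m' : ℕ} (h : m = m') (hm : m < n) (hm' : m' < n) :
    cyc n m hm = cyc n m' hm' := by subst h; rfl

lemma move_injective (ε : Fin 2) : Function.Injective (move ε (A := A)) := by
  intro P Q hPQ
  by_cases h : 0 < Fintype.card A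
  · have hε : P.p ε = Q.p ε := by
      rw [← move_p_self ε P, ← move_p_self ε Q, hPQ]
    have hzl : zlet ε P h = zlet ε Q h := by
      rw [zlet, zlet, hε]
    -- m values agree: evaluate the moved pair at the z letter
    set z := zlet ε P h with hzdef
    have hmP : (((move ε P).p (1 - ε)) z).val = ((P.p (1 - ε)) z).val := by
      rw [move_p_other ε P h]
      simp only [Equiv.trans_apply]
      rw [cyc_val]
      rw [← hzdef]; simp
    have hmQ : (((move ε Q).p (1 - ε)) z).val = ((Q.p (1 - ε)) z).val := by
      rw [move_p_other ε Q h, hzl]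
      simp only [Equiv.trans_apply]
      rw [cyc_val]
      simp
    have hm : ((P.p (1 - ε)) z).val = ((Q.p (1 - ε)) z).val := by
      rw [← hmP, ← hmQ, hPQ]
    -- now the two perms cyc are equal
    have hmm : (((P.p (1 - ε)) (zlet ε P h)) : Fin (Fintype.card A)).val
        = (((Q.p (1 - ε)) (zlet ε Q h)) : Fin (Fintype.card A)).val := by
      rw [← hzdef, ← hzl, hm]
    have hcyc : cyc (Fintype.card A) (((P.p (1 - ε)) (zlet ε P h)).val) (Fin.is_lt _)
        = cyc (Fintype.card A) (((Q.p (1 - ε)) (zlet ε Q h)).val) (Fin.is_lt _) :=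
      cyc_congr hmm _ _
    have hother : P.p (1 - ε) = Q.p (1 - ε) := by
      have h1 := move_p_other ε P h
      have h2 := move_p_other ε Q h
      rw [hPQ, h2, ← hcyc] at h1
      apply Equiv.ext
      intro a
      have h3 := congrArg (fun e : A ≃ Fin (Fintype.card A) => e a) h1
      simp only [Equiv.trans_apply] at h3
      exact ((cyc (Fintype.card A) (((P.p (1 - ε)) (zlet ε P h)).val)
        (Fin.is_lt _)).injective h3).symm
    apply RPair.ext'
    funext i
    rcases fin2_cases i ε with rfl | rfl
    · exact hε
    · exact hother
  · have hA : IsEmpty A := Fintype.card_eq_zero_iff.mp (by omega)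
    apply RPair.ext'; funext i; apply Equiv.ext; intro a; exact isEmptyElim a

lemma irr_iff (P : RPair A) (ε : Fin 2) :
    IrreduciblePair P ↔ ∀ k : ℕ, 0 < k → k < Fintype.card A →
      {a : A | ((P.p ε) a).val < k} ≠ {a : A | ((P.p (1 - ε)) a).val < k} := by
  fin_cases ε
  · rfl
  · constructor
    · intro h k h1 h2 hEq
      exact h k h1 h2 hEq.symm
    · intro h k h1 h2 hEq
      exact h k h1 h2 hEq.symm

lemma move_irreducible (ε : Fin 2) (P : RPair A) (hP : IrreduciblePair P) :
    IrreduciblePair (move ε P) := by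
  rw [irr_iff _ ε]
  intro k hk hkn hEq
  have h : 0 < Fintype.card A := by omega
  set n := Fintype.card A with hn
  set z := zlet ε P h with hzdef
  set m := ((P.p (1 - ε)) z).val with hmdef
  have hmn : m < n := Fin.is_lt _
  have hval : ∀ b : A, (((move ε P).p (1 - ε)) b).val =
      if ((P.p (1-ε)) b).val ≤ m then ((P.p (1-ε)) b).val
      else if ((P.p (1-ε)) b).val < n - 1 then ((P.p (1-ε)) b).val + 1 else m + 1 := by
    intro b
    rw [move_p_other ε P h]
    simp only [Equiv.trans_apply]
    rw [cyc_val]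
  rw [move_p_self] at hEq
  by_cases hkm : k ≤ m + 1
  · -- sets for (1-ε) row unchanged below k
    apply (irr_iff P ε).mp hP k hk hkn
    rw [hEq]
    ext a
    simp only [Set.mem_setOf_eq]
    rw [hval a]
    have := ((P.p (1-ε)) a).isLt
    split_ifs <;> omega
  · -- z is in the new (1-ε)-set but not in the ε-set
    have hz1 : z ∈ {a : A | (((move ε P).p (1 - ε)) a).val < k} := by
      simp only [Set.mem_setOf_eq]
      rw [hval z]
      simp only [← hmdef]
      split_ifs <;> omega
    have hz2 : z ∉ {a : A | ((P.p ε) a).val < k} := by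
      simp only [Set.mem_setOf_eq]
      have : ((P.p ε) z).val = n - 1 := by
        rw [hzdef, zlet, Equiv.apply_symm_apply]
      omega
    rw [hEq] at hz2
    exact hz2 hz1

instance : Finite (RPair A) :=
  Finite.of_injective (fun P : RPair A => P.p) (fun P Q h => RPair.ext' h)

lemma rmoveIter_iterate (ε : Fin 2) (k : ℕ) (P : RPair A) :
    RmoveIter ε k P ((move ε)^[k] P) := by
  induction k generalizing P with
  | zero => rfl
  | succ k ih =>
    exact ⟨move ε P, rmove_move ε P, by rw [Function.iterate_succ_apply]; exact ih _⟩

lemma exists_period (ε : Fin 2) (P : RPair A) :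
    ∃ k : ℕ, 0 < k ∧ (move ε)^[k] P = P := by
  obtain ⟨i, j, hne, hij⟩ :=
    Finite.exists_ne_map_eq_of_infinite (fun k : ℕ => (move ε)^[k] P)
  wlog hlt : i < j generalizing i j
  · exact this j i hne.symm hij.symm (by omega)
  refine ⟨j - i, by omega, ?_⟩
  have hiter : Function.Injective ((move ε)^[i] : RPair A → RPair A) :=
    Function.Injective.iterate (move_injective ε) i
  apply hiter
  calc (move ε)^[i] ((move ε)^[j-i] P) = (move ε)^[i + (j - i)] P := by
        rw [Function.iterate_add_apply]
    _ = (move ε)^[j] P := by congr 1; omega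
    _ = (move ε)^[i] P := hij.symm

/-- Each Rauzy move of type `ε` maps irreducible pairs to irreducible pairs
(and is defined on them), and iterating it some `k > 0` times returns to the
starting pair. -/
theorem rauzy_move_preserves_irreducible_and_has_finite_order
    {A : Type*} [Fintype A] (P : RPair A) (hP : IrreduciblePair P) (ε : Fin 2) :
    (∀ Q : RPair A, Rmove ε P Q → IrreduciblePair Q) ∧
    (∃ Q : RPair A, Rmove ε P Q) ∧
    (∃ k : ℕ, 0 < k ∧ RmoveIter ε k P P) := by
  refine ⟨?_, ⟨move ε P, rmove_move ε P⟩, ?_⟩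
  · intro Q hQ
    rw [rmove_eq hQ]
    exact move_irreducible ε P hP
  · obtain ⟨k, hk, hfix⟩ := exists_period ε P
    refine ⟨k, hk, ?_⟩
    have := rmoveIter_iterate ε k P
    rwa [hfix] at this
end

section
/- For an irreducible pair p = (p0, p1) on A, let q = (p1, p0) be its inverse. Then S(q) = S(p)^{-1}, where S is the permutation of A defined by S(p)(α) = p0^{-1}(1) if p1(α) = 1; S(p)(α) = p0^{-1}(p0(p1^{-1}(#A)) + 1) if p1(α) = p1(p0^{-1}(#A)) + 1; and otherwise S(p)(α) = p0^{-1}(p0(p1^{-1}(p1(α) - 1)) + 1). -/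
variable {A : Type*} [Fintype A]

/-- The inverse of a pair `(p0, p1)` is `(p1, p0)`. -/
def RPair.inv {A : Type*} [Fintype A] (P : RPair A) : RPair A :=
  ⟨fun ε => P.p (1 - ε)⟩

section Smap

variable {A : Type*} [Fintype A] [Nonempty A]

/-- The first position (value `1`). -/
def fin0 (A : Type*) [Fintype A] [Nonempty A] : Fin (Fintype.card A) :=
  ⟨0, Fintype.card_pos⟩

/-- The last position (value `#A`). -/
def finLast (A : Type*) [Fintype A] [Nonempty A] : Fin (Fintype.card A) :=
  ⟨Fintype.card A - 1, Nat.sub_lt Fintype.card_pos Nat.one_pos⟩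

/-- Successor position (cyclically, to make it total). -/
def finSucc (i : Fin (Fintype.card A)) : Fin (Fintype.card A) :=
  ⟨(i.val + 1) % Fintype.card A, Nat.mod_lt _ Fintype.card_pos⟩

/-- Predecessor position (truncated, to make it total). -/
def finPred {n : ℕ} (i : Fin n) : Fin n :=
  ⟨i.val - 1, lt_of_le_of_lt (Nat.sub_le _ _) i.isLt⟩

/-- The map `S(p) : A → A`:
`S(p)(α) = p0⁻¹(1)` if `p1(α) = 1`;
`S(p)(α) = p0⁻¹(p0(p1⁻¹(#A)) + 1)` if `p1(α) = p1(p0⁻¹(#A)) + 1`;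
`S(p)(α) = p0⁻¹(p0(p1⁻¹(p1(α) - 1)) + 1)` otherwise. -/
def Smap (P : RPair A) : A → A := fun α =>
  if ((P.p 1) α).val = 0 then (P.p 0).symm (fin0 A)
  else if ((P.p 1) α).val = ((P.p 1) ((P.p 0).symm (finLast A))).val + 1 then
    (P.p 0).symm (finSucc ((P.p 0) ((P.p 1).symm (finLast A))))
  else
    (P.p 0).symm (finSucc ((P.p 0) ((P.p 1).symm (finPred ((P.p 1) α)))))

end Smap


section Aux
set_option linter.unusedSectionVars false

variable {A : Type*} [Fintype A] [Nonempty A]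

@[simp] lemma RPair.inv_p0 (P : RPair A) : P.inv.p 0 = P.p 1 := rfl
@[simp] lemma RPair.inv_p1 (P : RPair A) : P.inv.p 1 = P.p 0 := rfl

lemma RPair.inv_inv (P : RPair A) : P.inv.inv = P := by
  cases P with
  | mk f =>
    unfold RPair.inv
    congr 1
    funext e
    fin_cases e <;> rfl

lemma inv_irred (P : RPair A) (hP : IrreduciblePair P) : IrreduciblePair P.inv := by
  intro k hk hk' h
  exact hP k hk hk' h.symm

/-- From irreducibility: the last letters of the two rows differ. -/
lemma last_ne (P : RPair A) (hP : IrreduciblePair P) (hn : 1 < Fintype.card A) :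
    ((P.p 1) ((P.p 0).symm (finLast A))).val ≠ Fintype.card A - 1 := by
  intro h
  apply hP (Fintype.card A - 1) (by omega) (by omega)
  have hz0 : (P.p 0) ((P.p 0).symm (finLast A)) = finLast A := Equiv.apply_symm_apply _ _
  have hz1 : (P.p 1) ((P.p 0).symm (finLast A)) = finLast A := Fin.ext h
  ext a
  simp only [Set.mem_setOf_eq]
  constructor
  · intro hlt
    have hne : a ≠ (P.p 0).symm (finLast A) := by
      rintro rfl; rw [hz0] at hlt; simp [finLast] at hlt
    have hne1 : (P.p 1) a ≠ finLast A := fun he =>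
      hne ((P.p 1).injective (he.trans hz1.symm))
    have h1 : ((P.p 1) a).val ≠ Fintype.card A - 1 := fun hv => hne1 (Fin.ext hv)
    have := ((P.p 1) a).isLt
    omega
  · intro hlt
    have hne : a ≠ (P.p 0).symm (finLast A) := by
      rintro rfl; rw [hz1] at hlt; simp [finLast] at hlt
    have hne0 : (P.p 0) a ≠ finLast A := fun he =>
      hne (by rw [← he, Equiv.symm_apply_apply])
    have h0 : ((P.p 0) a).val ≠ Fintype.card A - 1 := fun hv => hne0 (Fin.ext hv)
    have := ((P.p 0) a).isLt
    omega

lemma Smap_key (P : RPair A) (hP : IrreduciblePair P) (a : A) :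
    Smap P.inv (Smap P a) = a := by
  have hn0 : 0 < Fintype.card A := Fintype.card_pos
  by_cases h1 : ((P.p 1) a).val = 0
  · -- first branch
    have hfa : Smap P a = (P.p 0).symm (fin0 A) := by rw [Smap, if_pos h1]
    rw [hfa, Smap]
    simp only [RPair.inv_p0, RPair.inv_p1, Equiv.apply_symm_apply]
    have h0 : (fin0 A).val = 0 := rfl
    rw [if_pos h0]
    symm
    rw [Equiv.eq_symm_apply]
    apply Fin.ext
    exact h1
  · by_cases h2 : ((P.p 1) a).val = ((P.p 1) ((P.p 0).symm (finLast A))).val + 1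
    · -- second branch
      have hva := ((P.p 1) a).isLt
      have hn2 : 1 < Fintype.card A := by omega
      have hz := last_ne P hP hn2
      have hzv := ((P.p 1) ((P.p 0).symm (finLast A))).isLt
      -- the letter w = π1⁻¹(last); its π0-position is not last
      have hw : ((P.p 0) ((P.p 1).symm (finLast A))).val ≠ Fintype.card A - 1 := by
        intro hv
        have : (P.p 1).symm (finLast A) = (P.p 0).symm (finLast A) := by
          rw [Equiv.eq_symm_apply]; apply Fin.ext; exact hv
        apply hz
        rw [← this, Equiv.apply_symm_apply]
        rfl
      have hwv := ((P.p 0) ((P.p 1).symm (finLast A))).isLt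
      have hfa : Smap P a =
          (P.p 0).symm (finSucc ((P.p 0) ((P.p 1).symm (finLast A)))) := by
        rw [Smap, if_neg h1, if_pos h2]
      have hsv : (finSucc ((P.p 0) ((P.p 1).symm (finLast A)))).val =
          ((P.p 0) ((P.p 1).symm (finLast A))).val + 1 := by
        simp only [finSucc]
        exact Nat.mod_eq_of_lt (by omega)
      rw [hfa, Smap]
      simp only [RPair.inv_p0, RPair.inv_p1, Equiv.apply_symm_apply]
      rw [if_neg (by omega : ¬ (finSucc ((P.p 0) ((P.p 1).symm (finLast A)))).val = 0),
        if_pos hsv]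
      have hsv1 : (finSucc ((P.p 1) ((P.p 0).symm (finLast A)))).val =
          ((P.p 1) a).val := by
        simp only [finSucc]
        rw [Nat.mod_eq_of_lt (by omega)]
        omega
      symm
      rw [Equiv.eq_symm_apply]
      apply Fin.ext
      omega
    · -- third branch
      have hva := ((P.p 1) a).isLt
      have hn2 : 1 < Fintype.card A := by omega
      have hz := last_ne P hP hn2
      -- γ := π1⁻¹ (pred (π1 a))
      set g : A := (P.p 1).symm (finPred ((P.p 1) a)) with hg
      have hgv : ((P.p 1) g).val = ((P.p 1) a).val - 1 := by
        rw [hg, Equiv.apply_symm_apply]; rfl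
      have hg0 : ((P.p 0) g).val ≠ Fintype.card A - 1 := by
        intro hv
        have hge : g = (P.p 0).symm (finLast A) := by
          rw [Equiv.eq_symm_apply]; apply Fin.ext; exact hv
        apply h2
        rw [← hge, hgv]
        omega
      have hg0v := ((P.p 0) g).isLt
      have hfa : Smap P a = (P.p 0).symm (finSucc ((P.p 0) g)) := by
        rw [Smap, if_neg h1, if_neg h2]
      have hsv : (finSucc ((P.p 0) g)).val = ((P.p 0) g).val + 1 := by
        simp only [finSucc]
        exact Nat.mod_eq_of_lt (by omega)
      rw [hfa, Smap]
      simp only [RPair.inv_p0, RPair.inv_p1, Equiv.apply_symm_apply]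
      -- not first branch of Q
      rw [if_neg (by omega : ¬ (finSucc ((P.p 0) g)).val = 0)]
      -- not second branch of Q : would force π1 g = last, impossible
      have hns : ¬ (finSucc ((P.p 0) g)).val =
          ((P.p 0) ((P.p 1).symm (finLast A))).val + 1 := by
        intro hv
        have : (P.p 0) g = (P.p 0) ((P.p 1).symm (finLast A)) := Fin.ext (by omega)
        have hge : g = (P.p 1).symm (finLast A) := (P.p 0).injective this
        have : ((P.p 1) g).val = Fintype.card A - 1 := by
          rw [hge, Equiv.apply_symm_apply]; rfl
        omega
      rw [if_neg hns]
      have hp : finPred (finSucc ((P.p 0) g)) = (P.p 0) g := Fin.ext (by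
        simp only [finPred, hsv]; omega)
      rw [hp, Equiv.symm_apply_apply]
      have hfin : (finSucc ((P.p 1) g)).val = ((P.p 1) a).val := by
        simp only [finSucc, hgv]
        rw [Nat.mod_eq_of_lt (by omega)]
        omega
      symm
      rw [Equiv.eq_symm_apply]
      apply Fin.ext
      omega

end Aux

/-- For an irreducible pair `p` with inverse `q = (p1, p0)`, `S(q) = S(p)⁻¹`. -/
theorem Smap_inv
    {A : Type*} [Fintype A] [Nonempty A] (P : RPair A) (hP : IrreduciblePair P) :
    (∀ α : A, Smap P.inv (Smap P α) = α) ∧ (∀ α : A, Smap P (Smap P.inv α) = α) := by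
  constructor
  · exact Smap_key P hP
  · intro α
    have := Smap_key P.inv (inv_irred P hP) α
    rwa [RPair.inv_inv] at this
end

section
/- The map S(p) is invariant under Rauzy moves: if p is irreducible and q = ε p for ε ∈ {0,1}, then S(q) = S(p). Consequently S(q) = S(p) for every q in the Rauzy class of p. -/
variable {A : Type*} [Fintype A]

section Invariance
variable {A : Type*} [Fintype A] [Nonempty A]

theorem smap_rmove0 (P Q : RPair A) (h : Rmove 0 P Q) : Smap Q = Smap P := by
  obtain ⟨h0, hmv⟩ := h
  simp only [show (1 - 0 : Fin 2) = 1 from rfl] at hmv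
  funext α
  simp only [Smap, h0]
  have hnpos : 0 < Fintype.card A := Fintype.card_pos
  set a : A ≃ Fin (Fintype.card A) := P.p 0 with ha
  set b : A ≃ Fin (Fintype.card A) := P.p 1 with hb
  set z : A := a.symm (finLast A) with hzdef
  have hza : (a z).val = Fintype.card A - 1 := by simp [hzdef, finLast]
  set t : ℕ := (b z).val with htdef
  have htn : t < Fintype.card A := (b z).isLt
  have hF := hmv z hza
  set j : ℕ := (b α).val with hjdef
  have hjn : j < Fintype.card A := (b α).isLt
  have hFα : ((Q.p 1) α).val =
      if j ≤ t then j else if j < Fintype.card A - 1 then j + 1 else t + 1 := hF α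
  have hQz : ((Q.p 1) z).val = t := by rw [hF z]; simp; exact htdef.symm
  by_cases htop : t = Fintype.card A - 1
  · -- trivial case : Q.p 1 = b
    have hq1 : Q.p 1 = b := by
      apply Equiv.ext; intro c
      apply Fin.ext
      rw [hF c]
      have := (b c).isLt
      split_ifs <;> omega
    rw [hq1, ← hjdef, ← htdef]
  · have ht1 : t + 1 < Fintype.card A := by omega
    have hsymm : ∀ (y : Fin (Fintype.card A)) (w : ℕ) (hw : w < Fintype.card A),
        (if w ≤ t then w else if w < Fintype.card A - 1 then w + 1 else t + 1) = y.val →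
        (Q.p 1).symm y = b.symm ⟨w, hw⟩ := by
      intro y w hw hcond
      rw [Equiv.symm_apply_eq]
      apply Fin.ext
      rw [hF]
      simp only [Equiv.apply_symm_apply]
      exact hcond.symm
    rw [hFα, hQz]
    by_cases hj0 : j = 0
    · -- R1
      split_ifs <;> first | rfl | omega | (exfalso; assumption)
    · by_cases hjt : j ≤ t
      · -- R2 : 1 ≤ j ≤ t, third/third with w = j-1
        have hy : (Q.p 1).symm (finPred ((Q.p 1) α)) = b.symm ⟨j - 1, by omega⟩ := by
          apply hsymm
          simp only [finPred, hFα]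
          split_ifs <;> omega
        have hp : finPred (b α) = (⟨j - 1, by omega⟩ : Fin (Fintype.card A)) := by
          apply Fin.ext
          simp [finPred, ← hjdef]
        rw [hy, hp]
        split_ifs <;> first | rfl | omega | (exfalso; assumption)
      · by_cases hjt1 : j = t + 1
        · by_cases hjlast : j < Fintype.card A - 1
          · -- R3a : j = t+1 < n-1 : Q third (w = n-1) / P second
            have hy : (Q.p 1).symm (finPred ((Q.p 1) α)) =
                b.symm ⟨Fintype.card A - 1, by omega⟩ := by
              apply hsymm
              simp only [finPred, hFα]
              split_ifs <;> omega
            have hlast : (⟨Fintype.card A - 1, by omega⟩ : Fin (Fintype.card A)) = finLast A := by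
              apply Fin.ext
              simp [finLast]
            rw [hy, hlast]
            split_ifs <;> first | rfl | omega | (exfalso; assumption)
          · -- R3b : j = t+1 = n-1 : Q second (w = n-1) / P second
            have hy : (Q.p 1).symm (finLast A) = b.symm ⟨Fintype.card A - 1, by omega⟩ := by
              apply hsymm
              simp only [finLast]
              split_ifs <;> omega
            have hlast : (⟨Fintype.card A - 1, by omega⟩ : Fin (Fintype.card A)) = finLast A := by
              apply Fin.ext
              simp [finLast]
            rw [hy, hlast]
            split_ifs <;> first | rfl | omega | (exfalso; assumption)
        · by_cases hjlast : j < Fintype.card A - 1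
          · -- R4 : t+1 < j < n-1 : third/third with w = j-1
            have hy : (Q.p 1).symm (finPred ((Q.p 1) α)) = b.symm ⟨j - 1, by omega⟩ := by
              apply hsymm
              simp only [finPred, hFα]
              split_ifs <;> omega
            have hp : finPred (b α) = (⟨j - 1, by omega⟩ : Fin (Fintype.card A)) := by
              apply Fin.ext
              simp [finPred, ← hjdef]
            rw [hy, hp]
            split_ifs <;> first | rfl | omega | (exfalso; assumption)
          · -- R5 : j = n-1, t < n-2 : Q second (w = n-2) / P third
            have hjn1 : j = Fintype.card A - 1 := by omega
            have htn2 : t < Fintype.card A - 2 := by omega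
            have hy : (Q.p 1).symm (finLast A) = b.symm ⟨Fintype.card A - 2, by omega⟩ := by
              apply hsymm
              simp only [finLast]
              split_ifs <;> omega
            have hp : finPred (b α) = (⟨Fintype.card A - 2, by omega⟩ : Fin (Fintype.card A)) := by
              apply Fin.ext
              simp only [finPred, ← hjdef]
              omega
            rw [hy, hp]
            split_ifs <;> first | rfl | omega | (exfalso; assumption)

theorem smap_rmove1 (P Q : RPair A) (h : Rmove 1 P Q) : Smap Q = Smap P := by
  obtain ⟨h1, hmv⟩ := h
  simp only [show (1 - 1 : Fin 2) = 0 from rfl] at hmv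
  funext α
  simp only [Smap, h1]
  have hnpos : 0 < Fintype.card A := Fintype.card_pos
  have hc1 : Fintype.card A - 1 < Fintype.card A := by omega
  rw [show finLast A = ⟨Fintype.card A - 1, hc1⟩ from rfl,
      show fin0 A = (⟨0, hnpos⟩ : Fin (Fintype.card A)) from rfl]
  set a : A ≃ Fin (Fintype.card A) := P.p 0 with ha
  set b : A ≃ Fin (Fintype.card A) := P.p 1 with hb
  set z : A := b.symm ⟨Fintype.card A - 1, hc1⟩ with hzdef
  have hzb : (b z).val = Fintype.card A - 1 := by simp [hzdef]
  set t : ℕ := (a z).val with htdef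
  have htn : t < Fintype.card A := (a z).isLt
  have hF := hmv z hzb
  set j : ℕ := (b α).val with hjdef
  have hjn : j < Fintype.card A := (b α).isLt
  set u : ℕ := (b (a.symm ⟨Fintype.card A - 1, hc1⟩)).val with hudef
  have hun : u < Fintype.card A := (b _).isLt
  clear_value z t j u
  by_cases htop : Fintype.card A - 2 ≤ t
  · -- trivial case : Q.p 0 = a
    have hq0 : Q.p 0 = a := by
      apply Equiv.ext; intro c
      apply Fin.ext
      rw [hF c, ← htdef]
      have := (a c).isLt
      split_ifs <;> omega
    rw [hq0, ← hudef]
  · -- main case t < card - 2, so card ≥ 3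
    have hc2 : Fintype.card A - 2 < Fintype.card A := by omega
    have hsymm : ∀ (v w : ℕ) (hv : v < Fintype.card A) (hw : w < Fintype.card A),
        (if w ≤ t then w else if w < Fintype.card A - 1 then w + 1 else t + 1) = v →
        (Q.p 0).symm ⟨v, hv⟩ = a.symm ⟨w, hw⟩ := by
      intro v w hv hw hcond
      rw [Equiv.symm_apply_eq]
      apply Fin.ext
      rw [hF, ← htdef]
      simp only [Equiv.apply_symm_apply]
      exact hcond.symm
    -- rewrite the Q-side threshold letter
    have hTh : (Q.p 0).symm ⟨Fintype.card A - 1, hc1⟩ = a.symm ⟨Fintype.card A - 2, hc2⟩ :=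
      hsymm _ _ hc1 hc2 (by split_ifs <;> omega)
    rw [hTh]
    set m : ℕ := (b (a.symm ⟨Fintype.card A - 2, hc2⟩)).val with hmdef
    have hmn : m < Fintype.card A := (b _).isLt
    clear_value m
    have hum : ¬ u = m := by
      intro h
      have hbe : b (a.symm ⟨Fintype.card A - 1, hc1⟩) = b (a.symm ⟨Fintype.card A - 2, hc2⟩) :=
        Fin.ext (by omega)
      have h2 := a.symm.injective (b.injective hbe)
      have hval := congrArg Fin.val h2
      simp only [Fin.val_mk] at hval
      omega
    -- first-branch value
    have e1 : (Q.p 0).symm ⟨0, hnpos⟩ = a.symm ⟨0, hnpos⟩ :=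
      hsymm 0 0 hnpos hnpos (by split_ifs <;> omega)
    rw [e1]
    -- second-branch value on the Q side
    have hQz : (Q.p 0) z = ⟨t, htn⟩ := by
      apply Fin.ext
      rw [hF z, ← htdef]
      simp
    have ht1n : t + 1 < Fintype.card A := by omega
    have e2 : (Q.p 0).symm (finSucc ((Q.p 0) z)) = a.symm ⟨Fintype.card A - 1, hc1⟩ := by
      rw [hQz]
      have hsu : finSucc (⟨t, htn⟩ : Fin (Fintype.card A)) = ⟨t + 1, ht1n⟩ := by
        apply Fin.ext
        simp only [finSucc]
        exact Nat.mod_eq_of_lt ht1n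
      rw [hsu]
      exact hsymm (t + 1) (Fintype.card A - 1) ht1n hc1 (by split_ifs <;> omega)
    rw [e2]
    by_cases hj0 : j = 0
    · split_ifs <;> first | rfl | omega | (exfalso; assumption)
    · -- set up the letter c = b⁻¹(j-1) and its top position k
      set c : A := b.symm (finPred (b α)) with hcdef
      set k : ℕ := (a c).val with hkdef
      have hkn : k < Fintype.card A := (a c).isLt
      clear_value c k
      have hbc : (b c).val = j - 1 := by
        simp [hcdef, finPred, ← hjdef]
      have hkt : ¬ k = t := by
        intro hkt'
        have hc : c = z := a.injective (Fin.ext (by omega))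
        rw [hc] at hbc
        omega
      have hQc : ((Q.p 0) c).val =
          if k ≤ t then k else if k < Fintype.card A - 1 then k + 1 else t + 1 := by
        rw [hF c, ← htdef, ← hkdef]
      by_cases hju : j = u + 1
      · -- RB : Q third with k = card-1 / P second
        have hk1 : k = Fintype.card A - 1 := by
          have hbc2 : b c = b (a.symm ⟨Fintype.card A - 1, hc1⟩) := Fin.ext (by rw [hbc, hju, hudef]; omega)
          have hc : c = a.symm ⟨Fintype.card A - 1, hc1⟩ := b.injective hbc2
          rw [hkdef, hc, Equiv.apply_symm_apply]
        have hjm : ¬ j = m + 1 := by omega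
        have hQc' : ((Q.p 0) c).val = t + 1 := by rw [hQc]; split_ifs <;> omega
        have ht2n : t + 2 < Fintype.card A := by omega
        have hsu : finSucc ((Q.p 0) c) = ⟨t + 2, ht2n⟩ := by
          apply Fin.ext
          simp only [finSucc, hQc']
          exact Nat.mod_eq_of_lt ht2n
        have e3 : (Q.p 0).symm (finSucc ((Q.p 0) c)) = a.symm ⟨t + 1, ht1n⟩ := by
          rw [hsu]
          exact hsymm (t + 2) (t + 1) ht2n ht1n (by split_ifs <;> omega)
        have e4 : finSucc (a z) = (⟨t + 1, ht1n⟩ : Fin (Fintype.card A)) := by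
          apply Fin.ext
          simp only [finSucc, ← htdef]
          exact Nat.mod_eq_of_lt ht1n
        rw [e3, e4]
        split_ifs <;> first | rfl | omega | (exfalso; assumption)
      · by_cases hjm : j = m + 1
        · -- RC : Q second / P third with k = card-2
          have hk2 : k = Fintype.card A - 2 := by
            have hbc2 : b c = b (a.symm ⟨Fintype.card A - 2, hc2⟩) := Fin.ext (by rw [hbc, hjm, hmdef]; omega)
            have hc : c = a.symm ⟨Fintype.card A - 2, hc2⟩ := b.injective hbc2
            rw [hkdef, hc, Equiv.apply_symm_apply]
          have e5 : finSucc (a c) = (⟨Fintype.card A - 1, hc1⟩ : Fin (Fintype.card A)) := by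
            apply Fin.ext
            simp only [finSucc, ← hkdef]
            have hke : k + 1 = Fintype.card A - 1 := by omega
            rw [hke]
            exact Nat.mod_eq_of_lt hc1
          rw [e5]
          split_ifs <;> first | rfl | omega | (exfalso; assumption)
        · -- RD : both third
          have hk1 : ¬ k = Fintype.card A - 1 := by
            intro hk'
            have hc : c = a.symm ⟨Fintype.card A - 1, hc1⟩ := by
              apply a.injective
              rw [Equiv.apply_symm_apply]
              exact Fin.ext (by simp only [Fin.val_mk]; omega)
            rw [hc] at hbc
            omega
          have hk2 : ¬ k = Fintype.card A - 2 := by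
            intro hk'
            have hc : c = a.symm ⟨Fintype.card A - 2, hc2⟩ := by
              apply a.injective
              rw [Equiv.apply_symm_apply]
              exact Fin.ext (by simp only [Fin.val_mk]; omega)
            rw [hc] at hbc
            omega
          have hk1n : k + 1 < Fintype.card A := by omega
          have e7 : finSucc (a c) = (⟨k + 1, hk1n⟩ : Fin (Fintype.card A)) := by
            apply Fin.ext
            simp only [finSucc, ← hkdef]
            exact Nat.mod_eq_of_lt hk1n
          by_cases hklt : k < t
          · have hQc' : ((Q.p 0) c).val = k := by rw [hQc]; split_ifs <;> omega
            have hsu : finSucc ((Q.p 0) c) = ⟨k + 1, hk1n⟩ := by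
              apply Fin.ext
              simp only [finSucc, hQc']
              exact Nat.mod_eq_of_lt hk1n
            have e6 : (Q.p 0).symm (finSucc ((Q.p 0) c)) = a.symm ⟨k + 1, hk1n⟩ := by
              rw [hsu]
              exact hsymm (k + 1) (k + 1) hk1n hk1n (by split_ifs <;> omega)
            rw [e6, e7]
            split_ifs <;> first | rfl | omega | (exfalso; assumption)
          · have hkgt : t < k ∧ k < Fintype.card A - 2 := by omega
            have hQc' : ((Q.p 0) c).val = k + 1 := by rw [hQc]; split_ifs <;> omega
            have hk2n : k + 2 < Fintype.card A := by omega
            have hsu : finSucc ((Q.p 0) c) = ⟨k + 2, hk2n⟩ := by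
              apply Fin.ext
              simp only [finSucc, hQc']
              exact Nat.mod_eq_of_lt hk2n
            have e6 : (Q.p 0).symm (finSucc ((Q.p 0) c)) = a.symm ⟨k + 1, hk1n⟩ := by
              rw [hsu]
              exact hsymm (k + 2) (k + 1) hk2n hk1n (by split_ifs <;> omega)
            rw [e6, e7]
            split_ifs <;> first | rfl | omega | (exfalso; assumption)


end Invariance


/-- `S` is invariant under Rauzy moves, hence constant on Rauzy classes. -/
theorem Smap_rauzy_invariant
    {A : Type*} [Fintype A] [Nonempty A] (P : RPair A) (hP : IrreduciblePair P) :
    (∀ (ε : Fin 2) (Q : RPair A), Rmove ε P Q → Smap Q = Smap P) ∧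
    (∀ Q : RPair A, InRauzyClass P Q → Smap Q = Smap P) := by
  have key : ∀ (ε : Fin 2) (X Q : RPair A), Rmove ε X Q → Smap Q = Smap X := by
    intro ε X Q h
    fin_cases ε
    · exact smap_rmove0 X Q h
    · exact smap_rmove1 X Q h
  refine ⟨fun ε Q h => key ε P Q h, ?_⟩
  intro Q h
  induction h with
  | refl => rfl
  | tail _ hstep ih =>
    obtain ⟨ε, hm⟩ := hstep
    rw [key ε _ _ hm, ih]
end

section
/- Let M(p) denote the length of the cycle of the permutation S(p) containing the letter p0^{-1}(1). Then M is a Rauzy class invariant: M(q) = M(p) for every q in the Rauzy class of p. -/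
variable {A : Type*} [Fintype A]

/-- `M(p)`: the length of the cycle of `S(p)` containing `p0⁻¹(1)`. -/
noncomputable def Mval {A : Type*} [Fintype A] [Nonempty A] (P : RPair A) : ℕ :=
  Function.minimalPeriod (Smap P) ((P.p 0).symm (fin0 A))


namespace MvalInvAux

variable {A : Type*} [Fintype A] [Nonempty A]

/-- value map of the Rauzy insertion on positions -/
def gfun (n m i : ℕ) : ℕ := if i ≤ m then i else if i < n - 1 then i + 1 else m + 1

/-- inverse of `gfun` -/
def ginv (n m j : ℕ) : ℕ := if j ≤ m then j else if j = m + 1 then n - 1 else j - 1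

lemma ginv_lt {n m j : ℕ} (hn : 0 < n) (hj : j < n) : ginv n m j < n := by
  unfold ginv; split_ifs <;> omega

lemma gfun_ginv {n m j : ℕ} (hm : m < n) (hj : j < n) : gfun n m (ginv n m j) = j := by
  unfold gfun ginv; split_ifs <;> omega

lemma smap_congr {P Q : RPair A} (h0 : Q.p 0 = P.p 0) (h1 : Q.p 1 = P.p 1) :
    Smap Q = Smap P := by
  funext α; simp only [Smap, h0, h1]

lemma qsymm {e f : A ≃ Fin (Fintype.card A)} {m : ℕ} (hm : m < Fintype.card A)
    (hval : ∀ b, (f b).val = gfun (Fintype.card A) m ((e b).val))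
    (j : Fin (Fintype.card A)) :
    f.symm j = e.symm ⟨ginv (Fintype.card A) m j.val, ginv_lt Fintype.card_pos j.isLt⟩ := by
  rw [Equiv.symm_apply_eq]
  apply Fin.ext
  rw [hval, Equiv.apply_symm_apply]
  exact (gfun_ginv hm j.isLt).symm

lemma main0 {P Q : RPair A} (h0 : Q.p 0 = P.p 0)
    (hval : ∀ b, ((Q.p 1) b).val = gfun (Fintype.card A) ((P.p 1) ((P.p 0).symm (finLast A))).val ((P.p 1) b).val) :
    Smap Q = Smap P := by
  have hN : 0 < Fintype.card A := Fintype.card_pos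
  have hm : ((P.p 1) ((P.p 0).symm (finLast A))).val < Fintype.card A := Fin.isLt _
  by_cases hdeg : Fintype.card A ≤ ((P.p 1) ((P.p 0).symm (finLast A))).val + 2
  · refine smap_congr h0 (Equiv.ext fun b => Fin.ext ?_)
    rw [hval b]
    have hb := ((P.p 1) b).isLt
    unfold gfun; split_ifs <;> omega
  · push_neg at hdeg
    have hsym := qsymm (e := P.p 1) (f := Q.p 1) hm hval
    funext α
    have hjlt : ((P.p 1) α).val < Fintype.card A := Fin.isLt _
    simp only [Smap, h0]
    have hQz : ((Q.p 1) ((P.p 0).symm (finLast A))).val = ((P.p 1) ((P.p 0).symm (finLast A))).val := by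
      rw [hval]; unfold gfun; split_ifs <;> omega
    rw [hval α, hQz]
    by_cases c1 : ((P.p 1) α).val = 0
    · have hg : gfun (Fintype.card A) ((P.p 1) ((P.p 0).symm (finLast A))).val ((P.p 1) α).val = 0 := by
        rw [c1]; unfold gfun; split_ifs <;> omega
      rw [if_pos hg, if_pos c1]
    · by_cases c2 : ((P.p 1) α).val = ((P.p 1) ((P.p 0).symm (finLast A))).val + 1
      · have hg : gfun (Fintype.card A) ((P.p 1) ((P.p 0).symm (finLast A))).val ((P.p 1) α).val = ((P.p 1) ((P.p 0).symm (finLast A))).val + 2 := by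
          rw [c2]; unfold gfun; split_ifs <;> omega
        rw [hg, if_neg (show ¬ (((P.p 1) ((P.p 0).symm (finLast A))).val + 2 = 0) by omega),
          if_neg (show ¬ (((P.p 1) ((P.p 0).symm (finLast A))).val + 2 = ((P.p 1) ((P.p 0).symm (finLast A))).val + 1) by omega), if_neg c1, if_pos c2]
        have key : (Q.p 1).symm (finPred ((Q.p 1) α)) = (P.p 1).symm (finLast A) := by
          rw [hsym]
          refine congrArg _ (Fin.ext ?_)
          show ginv (Fintype.card A) ((P.p 1) ((P.p 0).symm (finLast A))).val (((Q.p 1) α).val - 1) = Fintype.card A - 1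
          rw [hval α, c2]
          unfold gfun ginv; split_ifs <;> omega
        rw [key]
      · by_cases c3 : ((P.p 1) α).val = Fintype.card A - 1
        · have hg : gfun (Fintype.card A) ((P.p 1) ((P.p 0).symm (finLast A))).val ((P.p 1) α).val = ((P.p 1) ((P.p 0).symm (finLast A))).val + 1 := by
            rw [c3]; unfold gfun; split_ifs <;> omega
          rw [hg, if_neg (show ¬ (((P.p 1) ((P.p 0).symm (finLast A))).val + 1 = 0) by omega), if_pos rfl, if_neg c1, if_neg c2]
          have key : (Q.p 1).symm (finLast A) = (P.p 1).symm (finPred ((P.p 1) α)) := by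
            rw [hsym]
            refine congrArg _ (Fin.ext ?_)
            show ginv (Fintype.card A) ((P.p 1) ((P.p 0).symm (finLast A))).val (Fintype.card A - 1) = ((P.p 1) α).val - 1
            rw [c3]
            unfold ginv; split_ifs <;> omega
          rw [key]
        · have hgne0 : ¬ (gfun (Fintype.card A) ((P.p 1) ((P.p 0).symm (finLast A))).val ((P.p 1) α).val = 0) := by
            intro h; unfold gfun at h; split_ifs at h <;> omega
          have hgnem : ¬ (gfun (Fintype.card A) ((P.p 1) ((P.p 0).symm (finLast A))).val ((P.p 1) α).val = ((P.p 1) ((P.p 0).symm (finLast A))).val + 1) := by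
            intro h; unfold gfun at h; split_ifs at h <;> omega
          rw [if_neg hgne0, if_neg hgnem, if_neg c1, if_neg c2]
          have key : (Q.p 1).symm (finPred ((Q.p 1) α)) = (P.p 1).symm (finPred ((P.p 1) α)) := by
            rw [hsym]
            refine congrArg _ (Fin.ext ?_)
            show ginv (Fintype.card A) ((P.p 1) ((P.p 0).symm (finLast A))).val (((Q.p 1) α).val - 1) = ((P.p 1) α).val - 1
            rw [hval α]
            unfold gfun ginv; split_ifs <;> omega
          rw [key]

set_option maxHeartbeats 2000000 in
lemma main1 {P Q : RPair A} (h1 : Q.p 1 = P.p 1)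
    (hval : ∀ b, ((Q.p 0) b).val = gfun (Fintype.card A) ((P.p 0) ((P.p 1).symm (finLast A))).val ((P.p 0) b).val) :
    Smap Q = Smap P := by
  have hN : 0 < Fintype.card A := Fintype.card_pos
  have hm : ((P.p 0) ((P.p 1).symm (finLast A))).val < Fintype.card A := Fin.isLt _
  by_cases hdeg : Fintype.card A ≤ ((P.p 0) ((P.p 1).symm (finLast A))).val + 2
  · refine smap_congr (Equiv.ext fun b => Fin.ext ?_) h1
    rw [hval b]
    have hb := ((P.p 0) b).isLt
    unfold gfun; split_ifs <;> omega
  · push_neg at hdeg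
    have hsym := qsymm (e := P.p 0) (f := Q.p 0) hm hval
    have hb1 : (Q.p 0).symm (fin0 A) = (P.p 0).symm (fin0 A) := by
      rw [hsym]
      refine congrArg _ (Fin.ext ?_)
      show ginv (Fintype.card A) ((P.p 0) ((P.p 1).symm (finLast A))).val 0 = 0
      unfold ginv; split_ifs <;> omega
    have hw : (Q.p 0).symm (finLast A) = (P.p 0).symm ⟨Fintype.card A - 2, by omega⟩ := by
      rw [hsym]
      refine congrArg _ (Fin.ext ?_)
      show ginv (Fintype.card A) ((P.p 0) ((P.p 1).symm (finLast A))).val (Fintype.card A - 1) = Fintype.card A - 2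
      unfold ginv; split_ifs <;> omega
    funext α
    have hjlt : ((P.p 1) α).val < Fintype.card A := Fin.isLt _
    simp only [Smap, h1]
    by_cases c1 : ((P.p 1) α).val = 0
    · rw [if_pos c1, if_pos c1, hb1]
    · have hβv : ((P.p 1) ((P.p 1).symm (finPred ((P.p 1) α)))).val = ((P.p 1) α).val - 1 := by
        rw [Equiv.apply_symm_apply]
        rfl
      have hk : ((P.p 0) ((P.p 1).symm (finPred ((P.p 1) α)))).val < Fintype.card A := Fin.isLt _
      have hkm : ¬ ((P.p 0) ((P.p 1).symm (finPred ((P.p 1) α)))).val = ((P.p 0) ((P.p 1).symm (finLast A))).val := by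
        intro he
        have hβz : ((P.p 1).symm (finPred ((P.p 1) α))) = (P.p 1).symm (finLast A) := (P.p 0).injective (Fin.ext he)
        have h2 : ((P.p 1) ((P.p 1).symm (finPred ((P.p 1) α)))).val = Fintype.card A - 1 := by
          rw [hβz, Equiv.apply_symm_apply]
          rfl
        rw [hβv] at h2
        omega
      have hpat : ∀ x : A, (((P.p 1) α).val = ((P.p 1) x).val + 1) ↔ ((P.p 1).symm (finPred ((P.p 1) α))) = x := by
        intro x
        constructor
        · intro hc
          apply (P.p 1).injective
          apply Fin.ext
          rw [hβv]
          omega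
        · intro hc
          rw [← hc, hβv]
          omega
      have hba : ((P.p 1).symm (finPred ((P.p 1) α))) = (P.p 0).symm (finLast A) ↔ ((P.p 0) ((P.p 1).symm (finPred ((P.p 1) α)))).val = Fintype.card A - 1 := by
        constructor
        · intro hc
          rw [hc, Equiv.apply_symm_apply]
          rfl
        · intro hc
          rw [Equiv.eq_symm_apply]
          exact Fin.ext hc
      have hbw : ((P.p 1).symm (finPred ((P.p 1) α))) = (Q.p 0).symm (finLast A) ↔ ((P.p 0) ((P.p 1).symm (finPred ((P.p 1) α)))).val = Fintype.card A - 2 := by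
        rw [hw]
        constructor
        · intro hc
          rw [hc, Equiv.apply_symm_apply]
        · intro hc
          rw [Equiv.eq_symm_apply]
          exact Fin.ext hc
      by_cases ck1 : ((P.p 0) ((P.p 1).symm (finPred ((P.p 1) α)))).val = Fintype.card A - 1
      · have hc2P : ((P.p 1) α).val = ((P.p 1) ((P.p 0).symm (finLast A))).val + 1 :=
          (hpat _).mpr (hba.mpr ck1)
        have hc2Q : ¬ (((P.p 1) α).val = ((P.p 1) ((Q.p 0).symm (finLast A))).val + 1) := by
          rw [hpat, hbw]; omega
        rw [if_neg c1, if_neg c1, if_neg hc2Q, if_pos hc2P]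
        have hgk : ((Q.p 0) ((P.p 1).symm (finPred ((P.p 1) α)))).val = ((P.p 0) ((P.p 1).symm (finLast A))).val + 1 := by
          rw [hval, ck1]; unfold gfun; split_ifs <;> omega
        have hfsQ : finSucc ((Q.p 0) ((P.p 1).symm (finPred ((P.p 1) α)))) = (⟨((P.p 0) ((P.p 1).symm (finLast A))).val + 2, by omega⟩ : Fin (Fintype.card A)) := by
          apply Fin.ext
          show (((Q.p 0) ((P.p 1).symm (finPred ((P.p 1) α)))).val + 1) % (Fintype.card A) = ((P.p 0) ((P.p 1).symm (finLast A))).val + 2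
          rw [hgk]
          exact Nat.mod_eq_of_lt (by omega)
        have hfsP : finSucc ((P.p 0) ((P.p 1).symm (finLast A))) = (⟨((P.p 0) ((P.p 1).symm (finLast A))).val + 1, by omega⟩ : Fin (Fintype.card A)) := by
          apply Fin.ext
          show (((P.p 0) ((P.p 1).symm (finLast A))).val + 1) % (Fintype.card A) = ((P.p 0) ((P.p 1).symm (finLast A))).val + 1
          exact Nat.mod_eq_of_lt (by omega)
        rw [hfsQ, hfsP, hsym]
        refine congrArg _ (Fin.ext ?_)
        show ginv (Fintype.card A) ((P.p 0) ((P.p 1).symm (finLast A))).val (((P.p 0) ((P.p 1).symm (finLast A))).val + 2) = ((P.p 0) ((P.p 1).symm (finLast A))).val + 1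
        unfold ginv; split_ifs <;> omega
      · by_cases ck2 : ((P.p 0) ((P.p 1).symm (finPred ((P.p 1) α)))).val = Fintype.card A - 2
        · have hc2Q : ((P.p 1) α).val = ((P.p 1) ((Q.p 0).symm (finLast A))).val + 1 :=
            (hpat _).mpr (hbw.mpr ck2)
          have hc2P : ¬ (((P.p 1) α).val = ((P.p 1) ((P.p 0).symm (finLast A))).val + 1) := by
            rw [hpat, hba]; omega
          rw [if_neg c1, if_neg c1, if_pos hc2Q, if_neg hc2P]
          have hQzv : ((Q.p 0) ((P.p 1).symm (finLast A))).val = ((P.p 0) ((P.p 1).symm (finLast A))).val := by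
            rw [hval]; unfold gfun; split_ifs <;> omega
          have hfsQ : finSucc ((Q.p 0) ((P.p 1).symm (finLast A))) = (⟨((P.p 0) ((P.p 1).symm (finLast A))).val + 1, by omega⟩ : Fin (Fintype.card A)) := by
            apply Fin.ext
            show (((Q.p 0) ((P.p 1).symm (finLast A))).val + 1) % (Fintype.card A) = ((P.p 0) ((P.p 1).symm (finLast A))).val + 1
            rw [hQzv]
            exact Nat.mod_eq_of_lt (by omega)
          have hfsP : finSucc ((P.p 0) ((P.p 1).symm (finPred ((P.p 1) α)))) = (⟨Fintype.card A - 1, by omega⟩ : Fin (Fintype.card A)) := by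
            apply Fin.ext
            show (((P.p 0) ((P.p 1).symm (finPred ((P.p 1) α)))).val + 1) % (Fintype.card A) = Fintype.card A - 1
            rw [ck2, Nat.mod_eq_of_lt (by omega)]
            omega
          rw [hfsQ, hfsP, hsym]
          refine congrArg _ (Fin.ext ?_)
          show ginv (Fintype.card A) ((P.p 0) ((P.p 1).symm (finLast A))).val (((P.p 0) ((P.p 1).symm (finLast A))).val + 1) = Fintype.card A - 1
          unfold ginv; split_ifs <;> omega
        · have hc2Q : ¬ (((P.p 1) α).val = ((P.p 1) ((Q.p 0).symm (finLast A))).val + 1) := by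
            rw [hpat, hbw]; exact ck2
          have hc2P : ¬ (((P.p 1) α).val = ((P.p 1) ((P.p 0).symm (finLast A))).val + 1) := by
            rw [hpat, hba]; exact ck1
          rw [if_neg c1, if_neg c1, if_neg hc2Q, if_neg hc2P]
          have hglt : gfun (Fintype.card A) ((P.p 0) ((P.p 1).symm (finLast A))).val ((P.p 0) ((P.p 1).symm (finPred ((P.p 1) α)))).val + 1 < Fintype.card A := by
            unfold gfun; split_ifs <;> omega
          have hfsQ : finSucc ((Q.p 0) ((P.p 1).symm (finPred ((P.p 1) α)))) = (⟨gfun (Fintype.card A) ((P.p 0) ((P.p 1).symm (finLast A))).val ((P.p 0) ((P.p 1).symm (finPred ((P.p 1) α)))).val + 1, hglt⟩ : Fin (Fintype.card A)) := by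
            apply Fin.ext
            show (((Q.p 0) ((P.p 1).symm (finPred ((P.p 1) α)))).val + 1) % (Fintype.card A) = gfun (Fintype.card A) ((P.p 0) ((P.p 1).symm (finLast A))).val ((P.p 0) ((P.p 1).symm (finPred ((P.p 1) α)))).val + 1
            rw [hval]
            exact Nat.mod_eq_of_lt hglt
          have hfsP : finSucc ((P.p 0) ((P.p 1).symm (finPred ((P.p 1) α)))) = (⟨((P.p 0) ((P.p 1).symm (finPred ((P.p 1) α)))).val + 1, by omega⟩ : Fin (Fintype.card A)) := by
            apply Fin.ext
            show (((P.p 0) ((P.p 1).symm (finPred ((P.p 1) α)))).val + 1) % (Fintype.card A) = ((P.p 0) ((P.p 1).symm (finPred ((P.p 1) α)))).val + 1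
            exact Nat.mod_eq_of_lt (by omega)
          rw [hfsQ, hfsP, hsym]
          refine congrArg _ (Fin.ext ?_)
          show ginv (Fintype.card A) ((P.p 0) ((P.p 1).symm (finLast A))).val (gfun (Fintype.card A) ((P.p 0) ((P.p 1).symm (finLast A))).val ((P.p 0) ((P.p 1).symm (finPred ((P.p 1) α)))).val + 1) = ((P.p 0) ((P.p 1).symm (finPred ((P.p 1) α)))).val + 1
          unfold gfun ginv; split_ifs <;> omega

lemma hz_of {P : RPair A} (r : Fin 2) :
    (((P.p r) ((P.p r).symm (finLast A))).val) = Fintype.card A - 1 := by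
  rw [Equiv.apply_symm_apply]
  rfl

lemma hval0 {P Q : RPair A} (h : Rmove 0 P Q) :
    ∀ b, ((Q.p 1) b).val = gfun (Fintype.card A) ((P.p 1) ((P.p 0).symm (finLast A))).val ((P.p 1) b).val := by
  intro b
  have h2 := h.2 ((P.p 0).symm (finLast A)) (hz_of 0) b
  rw [show (1 - 0 : Fin 2) = 1 from rfl] at h2
  exact h2

lemma hval1 {P Q : RPair A} (h : Rmove 1 P Q) :
    ∀ b, ((Q.p 0) b).val = gfun (Fintype.card A) ((P.p 0) ((P.p 1).symm (finLast A))).val ((P.p 0) b).val := by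
  intro b
  have h2 := h.2 ((P.p 1).symm (finLast A)) (hz_of 1) b
  rw [show (1 - 1 : Fin 2) = 0 from rfl] at h2
  exact h2

lemma smap_rmove {ε : Fin 2} {P Q : RPair A} (h : Rmove ε P Q) : Smap Q = Smap P := by
  have hε : ε = 0 ∨ ε = 1 := by omega
  rcases hε with rfl | rfl
  · exact main0 h.1 (hval0 h)
  · exact main1 h.1 (hval1 h)

lemma base_rmove {ε : Fin 2} {P Q : RPair A} (h : Rmove ε P Q) :
    (Q.p 0).symm (fin0 A) = (P.p 0).symm (fin0 A) := by
  have hε : ε = 0 ∨ ε = 1 := by omega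
  rcases hε with rfl | rfl
  · rw [h.1]
  · have hm : ((P.p 0) ((P.p 1).symm (finLast A))).val < Fintype.card A := Fin.isLt _
    rw [qsymm (e := P.p 0) (f := Q.p 0) hm (hval1 h)]
    refine congrArg _ (Fin.ext ?_)
    show ginv (Fintype.card A) ((P.p 0) ((P.p 1).symm (finLast A))).val 0 = 0
    unfold ginv; split_ifs <;> omega

lemma mval_step {P Q : RPair A} (h : ∃ ε, Rmove ε P Q) : Mval Q = Mval P := by
  obtain ⟨ε, h⟩ := h
  unfold Mval
  rw [smap_rmove h, base_rmove h]

end MvalInvAux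

/-- `M` is a Rauzy class invariant. -/
theorem Mval_rauzy_invariant
    {A : Type*} [Fintype A] [Nonempty A] (P : RPair A) (hP : IrreduciblePair P)
    (Q : RPair A) (hQ : InRauzyClass P Q) :
    Mval Q = Mval P := by
  induction hQ with
  | refl => rfl
  | tail _h1 h2 ih =>
    rw [MvalInvAux.mval_step h2]
    exact ih
end

section
/- Define H : pairs on A → pairs on A by H(p) = (p0', p1') with p_ε'(b) = #A + 1 − p_ε(b). Then for any irreducible pair p and ε ∈ {0,1}, the left Rauzy move of type ε satisfies ε̃ p = H(ε H(p)). -/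
variable {A : Type*} [Fintype A]

/-- The left Rauzy move of type `ε`, as a relation: row `ε` is fixed; in row
`1-ε` the first entry is cycled to just before the letter `a` occupying the
first position of row `ε` (0-indexed positions). -/
def Lmove {A : Type*} [Fintype A] (ε : Fin 2) (P Q : RPair A) : Prop :=
  Q.p ε = P.p ε ∧
  ∀ a : A, ((P.p ε) a).val = 0 →
    ∀ b : A, ((Q.p (1 - ε)) b).val =
      if ((P.p (1 - ε)) b).val = 0 then ((P.p (1 - ε)) a).val - 1
      else if ((P.p (1 - ε)) b).val < ((P.p (1 - ε)) a).val then ((P.p (1 - ε)) b).val - 1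
      else ((P.p (1 - ε)) b).val

/-- `H(p)` reverses both rows: `p_ε'(b) = #A + 1 - p_ε(b)`. -/
def Hmap {A : Type*} [Fintype A] (P : RPair A) : RPair A :=
  ⟨fun ε => (P.p ε).trans (Fin.revPerm : Equiv.Perm (Fin (Fintype.card A)))⟩

/-- The left Rauzy move of type `ε` satisfies `ε̃ p = H(ε H(p))`. -/
theorem left_move_eq_H_move_H
    {A : Type*} [Fintype A] (P : RPair A) (hP : IrreduciblePair P)
    (ε : Fin 2) (Q : RPair A) :
    Lmove ε P Q ↔ Rmove ε (Hmap P) (Hmap Q) := by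
  constructor
  · rintro ⟨h1, h2⟩
    refine ⟨by simp [Hmap, h1], ?_⟩
    intro z hz b
    have hzl := ((P.p ε) z).isLt
    have hz0 : ((P.p ε) z).val = 0 := by
      simp only [Hmap, Equiv.trans_apply, Fin.revPerm_apply, Fin.val_rev] at hz
      omega
    have h := h2 z hz0 b
    have hb := ((P.p (1-ε)) b).isLt
    have ha := ((P.p (1-ε)) z).isLt
    have hq := ((Q.p (1-ε)) b).isLt
    simp only [Hmap, Equiv.trans_apply, Fin.revPerm_apply, Fin.val_rev]
    split_ifs at h ⊢ <;> omega
  · rintro ⟨h1, h2⟩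
    constructor
    · ext x
      have := congrFun (congrArg (fun (e : A ≃ Fin (Fintype.card A)) => (e : A → Fin (Fintype.card A))) h1) x
      simp only [Hmap, Equiv.trans_apply, Fin.revPerm_apply] at this
      exact congrArg Fin.val (Fin.rev_injective this)
    · intro a ha0 b
      have hal := ((P.p ε) a).isLt
      have haz : (((Hmap P).p ε) a).val = Fintype.card A - 1 := by
        simp only [Hmap, Equiv.trans_apply, Fin.revPerm_apply, Fin.val_rev]
        omega
      have h := h2 a haz b
      have hb := ((P.p (1-ε)) b).isLt
      have ha := ((P.p (1-ε)) a).isLt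
      have hq := ((Q.p (1-ε)) b).isLt
      simp only [Hmap, Equiv.trans_apply, Fin.revPerm_apply, Fin.val_rev] at h
      split_ifs at h ⊢ <;> omega
end

section
/- Define Arf(p) = #{v ∈ Z_2^A : Q_p(v) = 1}. If q belongs to the non-labeled Extended Rauzy class of p (i.e., q is obtained from p by a finite sequence of Rauzy moves, left Rauzy moves, and renamings of the alphabet), then Arf(q) = Arf(p). -/
variable {A : Type*} [Fintype A]

/-- `L_p(a,b) = 1` iff the two rows order `a` and `b` oppositely. -/
def Lcoef {A : Type*} [Fintype A] (P : RPair A) (a b : A) : ZMod 2 :=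
  if ((P.p 0) a < (P.p 0) b ∧ (P.p 1) b < (P.p 1) a) ∨
     ((P.p 0) b < (P.p 0) a ∧ (P.p 1) a < (P.p 1) b) then 1 else 0

/-- The canonical quadratic form
`Q_p(v) = Σ_a v_a² + Σ_{{a,b}} L_p(a,b) v_a v_b (mod 2)`,
where each unordered pair `{a,b}` is summed once (ordered by row 0). -/
def QF {A : Type*} [Fintype A] (P : RPair A) (v : A → ZMod 2) : ZMod 2 :=
  (∑ a : A, v a * v a) +
    ∑ a : A, ∑ b : A, if (P.p 0) a < (P.p 0) b then Lcoef P a b * v a * v b else 0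

/-- `Arf(p)`: the number of vectors `v ∈ Z₂^A` with `Q_p(v) = 1`. -/
def Arf {A : Type*} [Fintype A] [DecidableEq A] (P : RPair A) : ℕ :=
  (Finset.univ.filter (fun v : A → ZMod 2 => QF P v = 1)).card

/-- One step of the non-labeled extended Rauzy equivalence: a Rauzy move,
a left Rauzy move, or a renaming of the alphabet. -/
def ExtStep {A : Type*} [Fintype A] (P Q : RPair A) : Prop :=
  (∃ ε, Rmove ε P Q) ∨ (∃ ε, Lmove ε P Q) ∨
  (∃ τ : A ≃ A, ∀ (ε : Fin 2) (b : A), (Q.p ε) b = (P.p ε) (τ b))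



def QC (P : RPair A) (v : A → ZMod 2) : ZMod 2 :=
  (∑ a : A, v a * v a) +
    ∑ a : A, ∑ b : A,
      if (P.p 0) a < (P.p 0) b ∧ (P.p 1) b < (P.p 1) a then v a * v b else 0

lemma QF_eq_QC (P : RPair A) (v : A → ZMod 2) : QF P v = QC P v := by
  unfold QF QC
  congr 1
  refine Finset.sum_congr rfl fun a _ => Finset.sum_congr rfl fun b _ => ?_
  by_cases h : (P.p 0) a < (P.p 0) b
  · rw [if_pos h]
    unfold Lcoef
    by_cases h2 : (P.p 1) b < (P.p 1) a
    · rw [if_pos (Or.inl ⟨h, h2⟩), if_pos ⟨h, h2⟩, one_mul]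
    · rw [if_neg, if_neg (fun hc => h2 hc.2), zero_mul, zero_mul]
      rintro (⟨_, hc⟩ | ⟨hc, _⟩)
      · exact h2 hc
      · exact absurd h (asymm hc)
  · rw [if_neg h, if_neg (fun hc => h hc.1)]

def swapP (P : RPair A) : RPair A := ⟨fun ε => P.p (1 - ε)⟩
def revP (P : RPair A) : RPair A := ⟨fun ε => (P.p ε).trans (Fin.revPerm)⟩

lemma QC_swap (P : RPair A) (v : A → ZMod 2) : QC (swapP P) v = QC P v := by
  unfold QC swapP
  simp only []
  congr 1
  rw [Finset.sum_comm]
  refine Finset.sum_congr rfl fun b _ => Finset.sum_congr rfl fun a _ => ?_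
  show (if (P.p 1) a < (P.p 1) b ∧ (P.p 0) b < (P.p 0) a then v a * v b else 0) = _
  rw [mul_comm]
  exact if_congr and_comm rfl rfl

lemma QC_rev (P : RPair A) (v : A → ZMod 2) : QC (revP P) v = QC P v := by
  unfold QC revP
  simp only [Equiv.trans_apply, Fin.revPerm_apply]
  congr 1
  rw [Finset.sum_comm]
  refine Finset.sum_congr rfl fun b _ => Finset.sum_congr rfl fun a _ => ?_
  rw [mul_comm]
  refine if_congr ?_ rfl rfl
  rw [Fin.rev_lt_rev, Fin.rev_lt_rev, and_comm]

lemma arf_eq_of {A : Type*} [Fintype A] [DecidableEq A] (P Q : RPair A)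
    (Φ Ψ : (A → ZMod 2) → (A → ZMod 2))
    (hΨΦ : ∀ v, Ψ (Φ v) = v) (hΦΨ : ∀ v, Φ (Ψ v) = v)
    (hQF : ∀ v, QF Q v = QF P (Φ v)) : Arf Q = Arf P := by
  unfold Arf
  refine Finset.card_bij' (fun v _ => Φ v) (fun u _ => Ψ u) ?_ ?_ ?_ ?_
  · intro v hv
    simp only [Finset.mem_filter, Finset.mem_univ, true_and] at hv ⊢
    rw [← hQF v]; exact hv
  · intro u hu
    simp only [Finset.mem_filter, Finset.mem_univ, true_and] at hu ⊢
    rw [hQF (Ψ u), hΦΨ u]; exact hu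
  · intro v _; exact hΨΦ v
  · intro u _; exact hΦΨ u

lemma arf_swap {A : Type*} [Fintype A] [DecidableEq A] (P : RPair A) :
    Arf (swapP P) = Arf P :=
  arf_eq_of P (swapP P) id id (fun _ => rfl) (fun _ => rfl)
    (fun v => by rw [QF_eq_QC, QF_eq_QC, QC_swap]; rfl)

lemma arf_rev {A : Type*} [Fintype A] [DecidableEq A] (P : RPair A) :
    Arf (revP P) = Arf P :=
  arf_eq_of P (revP P) id id (fun _ => rfl) (fun _ => rfl)
    (fun v => by rw [QF_eq_QC, QF_eq_QC, QC_rev]; rfl)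

lemma rmove_swap {P Q : RPair A} (h : Rmove 1 P Q) : Rmove 0 (swapP P) (swapP Q) := by
  obtain ⟨h1, h2⟩ := h
  have e10 : (1 - 0 : Fin 2) = 1 := rfl
  have e11 : (1 - 1 : Fin 2) = 0 := rfl
  constructor
  · show Q.p (1 - 0) = P.p (1 - 0)
    rw [e10]; exact h1
  · intro z hz b
    have hz' : ((P.p 1) z).val = Fintype.card A - 1 := hz
    have := h2 z hz' b
    rw [e11] at this
    exact this

lemma lmove_rev {ε : Fin 2} {P Q : RPair A} (h : Lmove ε P Q) :
    Rmove ε (revP P) (revP Q) := by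
  obtain ⟨h1, h2⟩ := h
  constructor
  · show (Q.p ε).trans _ = (P.p ε).trans _
    rw [h1]
  · intro z hz b
    have hcard : 0 < Fintype.card A := Fintype.card_pos_iff.mpr ⟨z⟩
    simp only [revP, Equiv.trans_apply, Fin.revPerm_apply, Fin.val_rev] at hz ⊢
    have hzlt : ((P.p ε) z).val < Fintype.card A := ((P.p ε) z).isLt
    have hz0 : ((P.p ε) z).val = 0 := by omega
    have hb := h2 z hz0 b
    rw [hb]
    have hblt : ((P.p (1-ε)) b).val < Fintype.card A := ((P.p (1-ε)) b).isLt
    have hzlt' : ((P.p (1-ε)) z).val < Fintype.card A := ((P.p (1-ε)) z).isLt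
    split_ifs <;> omega

lemma zmod2_add_self : ∀ u : ZMod 2, u + u = 0 := by decide

lemma arf_rmove0 {A : Type*} [Fintype A] [DecidableEq A] {P Q : RPair A}
    (h : Rmove 0 P Q) : Arf Q = Arf P := by
  obtain ⟨hr, hform⟩ := h
  rcases Nat.eq_zero_or_pos (Fintype.card A) with hn | hn
  · have hA : IsEmpty A := Fintype.card_eq_zero_iff.mp hn
    unfold Arf
    congr 1
    refine Finset.filter_congr fun v _ => ?_
    have : QF Q v = QF P v := by
      unfold QF
      simp [Finset.univ_eq_empty]
    rw [this]
  · set n := Fintype.card A with hndef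
    have hlast : n - 1 < n := by omega
    set r : A ≃ Fin n := P.p 0 with hrdef
    set s : A ≃ Fin n := P.p 1 with hsdef
    set s' : A ≃ Fin n := Q.p 1 with hs'def
    set z : A := r.symm ⟨n - 1, hlast⟩ with hzdef
    set w : A := s.symm ⟨n - 1, hlast⟩ with hwdef
    have hrz : (r z).val = n - 1 := by rw [hzdef, Equiv.apply_symm_apply]
    have hsw : (s w).val = n - 1 := by rw [hwdef, Equiv.apply_symm_apply]
    have hform' : ∀ b : A, (s' b).val =
        if (s b).val ≤ (s z).val then (s b).val
        else if (s b).val < n - 1 then (s b).val + 1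
        else (s z).val + 1 := by
      intro b
      exact hform z hrz b
    by_cases hzw : z = w
    · -- Q = P
      have hq1 : Q.p 1 = P.p 1 := by
        refine Equiv.ext fun b => Fin.ext ?_
        have := hform' b
        rw [hzw, hsw] at this
        rw [if_pos (by omega : (s b).val ≤ n - 1)] at this
        exact this
      have : Q = P := by
        cases Q with
        | mk q =>
          cases P with
          | mk p =>
            congr 1
            funext ε
            fin_cases ε
            · exact hr
            · exact hq1
      rw [this]
    · -- main case
      have hwz : w ≠ z := Ne.symm hzw
      have hszval : (s z).val < n - 1 := by
        have h1 : s z ≠ s w := fun e => hzw (s.injective e)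
        have h2 : (s z).val ≠ n - 1 := fun e => h1 (Fin.ext (by rw [e, hsw]))
        have := (s z).isLt
        omega
      have hsne : ∀ b : A, b ≠ w → (s b).val ≠ n - 1 := by
        intro b hb e
        exact hb (s.injective (Fin.ext (by rw [e, hsw])))
      have hrne : ∀ b : A, b ≠ z → (r b).val ≠ n - 1 := by
        intro b hb e
        exact hb (r.injective (Fin.ext (by rw [e, hrz])))
      -- order facts
      have f1 : ∀ b : A, b ≠ w → s b < s w := by
        intro b hb
        have := hsne b hb
        have := (s b).isLt
        rw [Fin.lt_def]; omega
      have f2 : ∀ b : A, ¬ (s w < s b) := by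
        intro b
        have := (s b).isLt
        rw [Fin.lt_def]; omega
      have hsw' : (s' w).val = (s z).val + 1 := by
        rw [hform' w, hsw, if_neg (by omega), if_neg (by omega)]
      have f3 : ∀ b : A, b ≠ w → (s' b < s' w ↔ (s b).val ≤ (s z).val) := by
        intro b hb
        have h1 := hsne b hb
        have h2 := (s b).isLt
        rw [Fin.lt_def, hsw', hform' b]
        split_ifs <;> omega
      have f4 : ∀ b : A, b ≠ w → (s' w < s' b ↔ s z < s b) := by
        intro b hb
        have h1 := hsne b hb
        have h2 := (s b).isLt
        rw [Fin.lt_def, Fin.lt_def, hsw', hform' b]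
        split_ifs <;> omega
      have f2' : ∀ b c : A, b ≠ w → c ≠ w → (s' b < s' c ↔ s b < s c) := by
        intro b c hb hc
        have h1 := hsne b hb
        have h2 := hsne c hc
        have h3 := (s b).isLt
        have h4 := (s c).isLt
        rw [Fin.lt_def, Fin.lt_def, hform' b, hform' c]
        split_ifs <;> omega
      have f6' : ∀ b : A, ¬ (r z < r b) := by
        intro b
        have := (r b).isLt
        rw [Fin.lt_def]; omega
      have f6 : ∀ a : A, a ≠ z → r a < r z := by
        intro a ha
        have := hrne a ha
        have := (r a).isLt
        rw [Fin.lt_def]; omega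
      have f5 : ∀ b : A, b ≠ w → ¬ (r w < r b) → r b < r w := by
        intro b hb hnb
        rcases lt_trichotomy (r b) (r w) with h | h | h
        · exact h
        · exact absurd (r.injective h) hb
        · exact absurd h hnb
      -- the substitution
      set Φ : (A → ZMod 2) → (A → ZMod 2) :=
        fun v a => if a = z then v z + v w else v a with hΦdef
      have hΦΦ : ∀ v, Φ (Φ v) = v := by
        intro v
        funext a
        by_cases ha : a = z
        · subst ha
          have e1 : Φ v z = v z + v w := if_pos rfl
          have e2 : Φ v w = v w := if_neg hwz
          have e3 : Φ (Φ v) z = Φ v z + Φ v w := if_pos rfl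
          rw [e3, e1, e2, add_assoc, zmod2_add_self, add_zero]
        · simp only [hΦdef, if_neg ha]
      refine arf_eq_of P Q Φ Φ hΦΦ hΦΦ ?_
      intro v
      rw [QF_eq_QC, QF_eq_QC]
      unfold QC
      have hq0 : Q.p 0 = r := hr
      rw [hq0]
      show (∑ a : A, v a * v a) +
          ∑ a : A, ∑ b : A, (if r a < r b ∧ s' b < s' a then v a * v b else 0) =
        (∑ a : A, Φ v a * Φ v a) +
          ∑ a : A, ∑ b : A, (if r a < r b ∧ s b < s a then Φ v a * Φ v b else 0)
      -- abbreviations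
      have hsq2 : ∀ x y : ZMod 2, (x + y) * (x + y) = x * x + y * y := by decide
      have hΦa : ∀ a : A, Φ v a = v a + (if a = z then v w else 0) := by
        intro a
        by_cases ha : a = z
        · subst ha
          rw [if_pos rfl]
          exact if_pos rfl
        · rw [if_neg ha, add_zero]
          exact if_neg ha
      -- diagonal part
      have hdiag : (∑ a : A, Φ v a * Φ v a) = (∑ a : A, v a * v a) + v w * v w := by
        calc (∑ a : A, Φ v a * Φ v a)
            = ∑ a : A, (v a * v a + if a = z then v w * v w else 0) := by
              refine Finset.sum_congr rfl fun a _ => ?_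
              by_cases ha : a = z
              · subst ha
                rw [if_pos rfl, hΦa, if_pos rfl, hsq2]
              · rw [if_neg ha, add_zero, hΦa, if_neg ha, add_zero]
          _ = (∑ a : A, v a * v a) + ∑ a : A, (if a = z then v w * v w else 0) :=
              Finset.sum_add_distrib
          _ = (∑ a : A, v a * v a) + v w * v w := by
              rw [Finset.sum_ite_eq' Finset.univ z (fun _ => v w * v w),
                if_pos (Finset.mem_univ z)]
      -- expansion of the double sum with Φ
      have hterm : ∀ a b : A,
          (if r a < r b ∧ s b < s a then Φ v a * Φ v b else 0)
          = (if r a < r b ∧ s b < s a then v a * v b else 0)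
            + (if a = z then (if r a < r b ∧ s b < s a then v w * v b else 0) else 0)
            + (if b = z then (if r a < r b ∧ s b < s a then v a * v w else 0) else 0)
            + (if a = z then (if b = z then
                (if r a < r b ∧ s b < s a then v w * v w else 0) else 0) else 0) := by
        intro a b
        by_cases haz : a = z
        · subst haz
          by_cases hbz : b = z
          · subst hbz
            by_cases hC : r z < r z ∧ s z < s z <;> simp [hC, hΦa] <;> ring
          · by_cases hC : r z < r b ∧ s b < s z <;> simp [hC, hΦa, hbz] <;> ring
        · by_cases hbz : b = z
          · subst hbz
            by_cases hC : r a < r z ∧ s z < s a <;> simp [hC, hΦa, haz] <;> ring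
          · by_cases hC : r a < r b ∧ s b < s a <;> simp [hC, hΦa, haz, hbz] <;> ring
      -- sum the expansion
      have hsum2 : (∑ a : A, ∑ b : A, (if r a < r b ∧ s b < s a then Φ v a * Φ v b else 0))
          = (∑ a : A, ∑ b : A, (if r a < r b ∧ s b < s a then v a * v b else 0))
            + (∑ a : A, ∑ b : A,
                (if a = z then (if r a < r b ∧ s b < s a then v w * v b else 0) else 0))
            + (∑ a : A, ∑ b : A,
                (if b = z then (if r a < r b ∧ s b < s a then v a * v w else 0) else 0))
            + (∑ a : A, ∑ b : A, (if a = z then (if b = z then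
                (if r a < r b ∧ s b < s a then v w * v w else 0) else 0) else 0)) := by
        rw [← Finset.sum_add_distrib, ← Finset.sum_add_distrib, ← Finset.sum_add_distrib]
        refine Finset.sum_congr rfl fun a _ => ?_
        rw [← Finset.sum_add_distrib, ← Finset.sum_add_distrib, ← Finset.sum_add_distrib]
        exact Finset.sum_congr rfl fun b _ => hterm a b
      -- second summand is zero
      have hS2 : (∑ a : A, ∑ b : A,
          (if a = z then (if r a < r b ∧ s b < s a then v w * v b else 0) else 0)) = 0 := by
        have : ∀ a : A, (∑ b : A,
            (if a = z then (if r a < r b ∧ s b < s a then v w * v b else 0) else 0))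
            = (if a = z then (∑ b : A,
                (if r a < r b ∧ s b < s a then v w * v b else 0)) else 0) := by
          intro a
          by_cases ha : a = z <;> simp [ha]
        rw [Finset.sum_congr rfl fun a _ => this a,
          Finset.sum_ite_eq' Finset.univ z _, if_pos (Finset.mem_univ z)]
        refine Finset.sum_eq_zero fun b _ => if_neg fun hc => f6' b hc.1
      -- fourth summand is zero
      have hS4 : (∑ a : A, ∑ b : A, (if a = z then (if b = z then
          (if r a < r b ∧ s b < s a then v w * v w else 0) else 0) else 0)) = 0 := by
        have : ∀ a : A, (∑ b : A, (if a = z then (if b = z then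
            (if r a < r b ∧ s b < s a then v w * v w else 0) else 0) else 0))
            = (if a = z then (∑ b : A, (if b = z then
                (if r a < r b ∧ s b < s a then v w * v w else 0) else 0)) else 0) := by
          intro a
          by_cases ha : a = z <;> simp [ha]
        rw [Finset.sum_congr rfl fun a _ => this a,
          Finset.sum_ite_eq' Finset.univ z _, if_pos (Finset.mem_univ z),
          Finset.sum_ite_eq' Finset.univ z _, if_pos (Finset.mem_univ z)]
        exact if_neg fun hc => lt_irrefl _ hc.1
      -- third summand
      have hS3 : (∑ a : A, ∑ b : A,
          (if b = z then (if r a < r b ∧ s b < s a then v a * v w else 0) else 0))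
          = v w * v w + ∑ a ∈ Finset.univ.erase w,
              (if a ≠ z ∧ s z < s a then v a * v w else 0) := by
        have e1 : ∀ a : A, (∑ b : A,
            (if b = z then (if r a < r b ∧ s b < s a then v a * v w else 0) else 0))
            = (if r a < r z ∧ s z < s a then v a * v w else 0) := by
          intro a
          rw [Finset.sum_ite_eq' Finset.univ z _, if_pos (Finset.mem_univ z)]
        rw [Finset.sum_congr rfl fun a _ => e1 a]
        have e2 : ∀ a : A, (if r a < r z ∧ s z < s a then v a * v w else 0)
            = (if a ≠ z ∧ s z < s a then v a * v w else 0) := by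
          intro a
          by_cases ha : a = z
          · subst ha
            rw [if_neg fun hc => lt_irrefl _ hc.1, if_neg fun hc => hc.1 rfl]
          · exact if_congr (and_congr_left' (iff_of_true (f6 a ha) ha)) rfl rfl
        rw [Finset.sum_congr rfl fun a _ => e2 a,
          ← Finset.add_sum_erase _ _ (Finset.mem_univ w),
          if_pos ⟨hwz, f1 z hzw⟩]
      -- decomposition of a double sum along w
      have hdecomp : ∀ F : A → A → ZMod 2, F w w = 0 →
          (∑ a : A, ∑ b : A, F a b)
          = (∑ a ∈ Finset.univ.erase w, ∑ b ∈ Finset.univ.erase w, F a b)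
            + ((∑ b ∈ Finset.univ.erase w, F w b)
              + (∑ a ∈ Finset.univ.erase w, F a w)) := by
        intro F hww
        rw [← Finset.add_sum_erase _ (fun a => ∑ b : A, F a b) (Finset.mem_univ w)]
        rw [← Finset.add_sum_erase _ (F w) (Finset.mem_univ w), hww, zero_add]
        have e3 : ∀ a ∈ Finset.univ.erase w,
            (∑ b : A, F a b) = F a w + ∑ b ∈ Finset.univ.erase w, F a b :=
          fun a _ => (Finset.add_sum_erase _ (F a) (Finset.mem_univ w)).symm
        rw [Finset.sum_congr rfl e3, Finset.sum_add_distrib]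
        abel
      have hdec' : (∑ a : A, ∑ b : A, (if r a < r b ∧ s' b < s' a then v a * v b else 0))
          = (∑ a ∈ Finset.univ.erase w, ∑ b ∈ Finset.univ.erase w,
              (if r a < r b ∧ s' b < s' a then v a * v b else 0))
            + ((∑ b ∈ Finset.univ.erase w,
                (if r w < r b ∧ s' b < s' w then v w * v b else 0))
              + (∑ b ∈ Finset.univ.erase w,
                (if r b < r w ∧ s' w < s' b then v b * v w else 0))) :=
        hdecomp _ (if_neg fun hc => lt_irrefl _ hc.1)
      have hdec : (∑ a : A, ∑ b : A, (if r a < r b ∧ s b < s a then v a * v b else 0))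
          = (∑ a ∈ Finset.univ.erase w, ∑ b ∈ Finset.univ.erase w,
              (if r a < r b ∧ s b < s a then v a * v b else 0))
            + ((∑ b ∈ Finset.univ.erase w,
                (if r w < r b ∧ s b < s w then v w * v b else 0))
              + (∑ b ∈ Finset.univ.erase w,
                (if r b < r w ∧ s w < s b then v b * v w else 0))) :=
        hdecomp _ (if_neg fun hc => lt_irrefl _ hc.1)
      -- the two interior double sums agree
      have hEE : (∑ a ∈ Finset.univ.erase w, ∑ b ∈ Finset.univ.erase w,
            (if r a < r b ∧ s' b < s' a then v a * v b else 0))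
          = (∑ a ∈ Finset.univ.erase w, ∑ b ∈ Finset.univ.erase w,
            (if r a < r b ∧ s b < s a then v a * v b else 0)) := by
        refine Finset.sum_congr rfl fun a ha => Finset.sum_congr rfl fun b hb => ?_
        exact if_congr (and_congr_right fun _ =>
          f2' b a (Finset.ne_of_mem_erase hb) (Finset.ne_of_mem_erase ha)) rfl rfl
      -- edge terms
      have hedge : (∑ b ∈ Finset.univ.erase w,
              (if r w < r b ∧ s' b < s' w then v w * v b else 0))
            + (∑ b ∈ Finset.univ.erase w,
              (if r b < r w ∧ s' w < s' b then v b * v w else 0))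
          = ((∑ b ∈ Finset.univ.erase w,
              (if r w < r b ∧ s b < s w then v w * v b else 0))
            + (∑ b ∈ Finset.univ.erase w,
              (if r b < r w ∧ s w < s b then v b * v w else 0)))
            + (∑ b ∈ Finset.univ.erase w,
              (if b ≠ z ∧ s z < s b then v b * v w else 0)) := by
        rw [← Finset.sum_add_distrib, ← Finset.sum_add_distrib, ← Finset.sum_add_distrib]
        refine Finset.sum_congr rfl fun b hb => ?_
        have hbw : b ≠ w := Finset.ne_of_mem_erase hb
        have h1 : s b < s w := f1 b hbw
        have h2 : ¬ s w < s b := f2 b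
        have h3 := f3 b hbw
        have h4 := f4 b hbw
        by_cases hbz : b = z
        · subst hbz
          have c1 : r w < r z := f6 w hwz
          have c2 : ¬ r z < r w := asymm c1
          simp [h3, h4, c1, c2, h1, h2]
        · by_cases hc2 : s z < s b
          · have hle : ¬ (s b).val ≤ (s z).val := by
              rw [Fin.lt_def] at hc2; omega
            by_cases hrw : r w < r b
            · have hnb : ¬ r b < r w := asymm hrw
              simp [h3, h4, hbz, hc2, hle, hrw, hnb, h1, h2]
              rw [mul_comm (v b) (v w)]
              exact (zmod2_add_self _).symm
            · have hbr := f5 b hbw hrw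
              simp [h3, h4, hbz, hc2, hle, hrw, hbr, h1, h2]
          · have hle : (s b).val ≤ (s z).val := by
              have := Fin.not_lt.mp hc2
              exact this
            simp [h3, h4, hbz, hc2, hle, h1, h2]
      -- final assembly
      rw [hdiag, hsum2, hS2, hS4, hS3, hdec', hdec, hEE, hedge]
      linear_combination -1 * zmod2_add_self (v w * v w)

lemma arf_rename {A : Type*} [Fintype A] [DecidableEq A] {P Q : RPair A} (τ : A ≃ A)
    (h : ∀ (ε : Fin 2) (b : A), (Q.p ε) b = (P.p ε) (τ b)) : Arf Q = Arf P := by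
  refine arf_eq_of P Q (fun u => u ∘ τ.symm) (fun u => u ∘ τ) ?_ ?_ ?_
  · intro u; funext a; simp
  · intro u; funext a; simp
  · intro v
    rw [QF_eq_QC, QF_eq_QC]
    unfold QC
    congr 1
    · refine Finset.sum_equiv τ (by simp) fun a _ => ?_
      simp
    · refine Finset.sum_equiv τ (by simp) fun a _ => ?_
      refine Finset.sum_equiv τ (by simp) fun b _ => ?_
      rw [h 0 a, h 0 b, h 1 a, h 1 b]
      simp

lemma arf_step {A : Type*} [Fintype A] [DecidableEq A] {P Q : RPair A}
    (h : ExtStep P Q) : Arf Q = Arf P := by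
  have htwo : ∀ x : Fin 2, x = 0 ∨ x = 1 := by decide
  rcases h with ⟨ε, hm⟩ | ⟨ε, hm⟩ | ⟨τ, hτ⟩
  · rcases htwo ε with rfl | rfl
    · exact arf_rmove0 hm
    · have h2 := rmove_swap hm
      have h3 := arf_rmove0 h2
      rwa [arf_swap, arf_swap] at h3
  · have h1 := lmove_rev hm
    rcases htwo ε with rfl | rfl
    · have h3 := arf_rmove0 h1
      rwa [arf_rev, arf_rev] at h3
    · have h2 := rmove_swap h1
      have h3 := arf_rmove0 h2
      rwa [arf_swap, arf_rev, arf_swap, arf_rev] at h3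
  · exact arf_rename τ hτ

theorem arf_extended_invariant'
    {A : Type*} [Fintype A] [DecidableEq A] (P Q : RPair A)
    (h : Relation.ReflTransGen (ExtStep (A := A)) P Q) :
    Arf Q = Arf P := by
  induction h with
  | refl => rfl
  | tail _ hstep ih => rw [arf_step hstep, ih]

/-- `Arf` is invariant on non-labeled extended Rauzy classes. -/
theorem arf_extended_invariant
    {A : Type*} [Fintype A] [DecidableEq A] (P Q : RPair A) (hP : IrreduciblePair P)
    (h : Relation.ReflTransGen (ExtStep (A := A)) P Q) :
    Arf Q = Arf P :=
  arf_extended_invariant' P Q h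
end

section
/- If p is an order reversing pair on A (p0(b) + p1(b) = #A + 1 for all b ∈ A), then p is the only standard pair in its Rauzy class. -/
variable {A : Type*} [Fintype A]

/-- A pair is order reversing if `p0(b) + p1(b) = #A + 1` for every letter `b`
(0-indexed: the positions sum to `#A - 1`). -/
def OrderReversing {A : Type*} [Fintype A] (P : RPair A) : Prop :=
  ∀ b : A, ((P.p 0) b).val + ((P.p 1) b).val = Fintype.card A - 1


namespace ORU
open List

/-- count of entries `< k` -/
def cnt (y : List ℕ) (k : ℕ) : ℕ := y.countP (fun a => decide (a < k))

lemma cnt_le_length (y : List ℕ) (k : ℕ) : cnt y k ≤ y.length := List.countP_le_length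

lemma cnt_mono (y : List ℕ) {k k' : ℕ} (h : k ≤ k') : cnt y k ≤ cnt y k' :=
  List.countP_mono_left (fun a _ ha => by simp at ha ⊢; omega)

lemma cnt_eq_length (y : List ℕ) (k : ℕ) (h : ∀ a ∈ y, a < k) : cnt y k = y.length :=
  List.countP_eq_length.2 (fun a ha => by simp [h a ha])

lemma cnt_eq_zero (y : List ℕ) (k : ℕ) (h : ∀ a ∈ y, ¬ a < k) : cnt y k = 0 :=
  List.countP_eq_zero.2 (fun a ha => by simp [h a ha])

lemma cnt_append1 (y : List ℕ) (a k : ℕ) :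
    cnt (y ++ [a]) k = cnt y k + if a < k then 1 else 0 := by
  unfold cnt
  rw [List.countP_append]
  congr 1
  by_cases h : a < k <;> simp [h, List.countP_cons]

lemma sorted_getElem_mono {y : List ℕ} (hs : y.Pairwise (· ≤ ·)) {i j : ℕ}
    (hij : i ≤ j) (hj : j < y.length) : y[i]'(lt_of_le_of_lt hij hj) ≤ y[j] := by
  rcases eq_or_lt_of_le hij with rfl | h
  · exact le_refl _
  · exact List.pairwise_iff_getElem.1 hs i j _ hj h

/-- key bridge: for sorted `y`, `cnt y k ≤ i ↔ k ≤ y[i]`. -/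
lemma cnt_le_iff {y : List ℕ} (hs : y.Pairwise (· ≤ ·)) {i k : ℕ} (hi : i < y.length) :
    cnt y k ≤ i ↔ k ≤ y.getD i 0 := by
  rw [List.getD_eq_getElem y 0 hi]
  constructor
  · intro h
    by_contra hk
    push_neg at hk
    have h1 : cnt y k = cnt (y.take (i+1)) k + cnt (y.drop (i+1)) k := by
      unfold cnt; rw [← List.countP_append, List.take_append_drop]
    have h2 : cnt (y.take (i+1)) k = (y.take (i+1)).length := by
      apply cnt_eq_length
      intro a ha
      obtain ⟨m, hm, rfl⟩ := List.mem_iff_getElem.1 ha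
      rw [List.getElem_take]
      have hmi : m ≤ i := by
        have := hm; rw [List.length_take] at this; omega
      exact lt_of_le_of_lt (sorted_getElem_mono hs hmi hi) hk
    have h3 : (y.take (i+1)).length = i+1 := by rw [List.length_take]; omega
    omega
  · intro h
    have h1 : cnt y k = cnt (y.take i) k + cnt (y.drop i) k := by
      unfold cnt; rw [← List.countP_append, List.take_append_drop]
    have h2 : cnt (y.drop i) k = 0 := by
      apply cnt_eq_zero
      intro a ha
      obtain ⟨m, hm, rfl⟩ := List.mem_iff_getElem.1 ha
      rw [List.getElem_drop]
      have : y[i] ≤ y[i+m]'(by rw [List.length_drop] at hm; omega) :=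
        sorted_getElem_mono hs (by omega) (by rw [List.length_drop] at hm; omega)
      omega
    have h3 : cnt (y.take i) k ≤ (y.take i).length := cnt_le_length _ _
    rw [List.length_take] at h3
    omega

lemma lt_cnt_iff {y : List ℕ} (hs : y.Pairwise (· ≤ ·)) {i k : ℕ} (hi : i < y.length) :
    i < cnt y k ↔ y.getD i 0 < k := by
  have := cnt_le_iff hs hi (k := k); omega

lemma cnt_take {y : List ℕ} (hs : y.Pairwise (· ≤ ·)) {k r : ℕ} (hk : k ≤ r) :
    cnt (y.take (cnt y r)) k = cnt y k := by
  have h1 : cnt y k = cnt (y.take (cnt y r)) k + cnt (y.drop (cnt y r)) k := by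
    unfold cnt; rw [← List.countP_append, List.take_append_drop]
  have h2 : cnt (y.drop (cnt y r)) k = 0 := by
    apply cnt_eq_zero
    intro a ha
    obtain ⟨m, hm, rfl⟩ := List.mem_iff_getElem.1 ha
    rw [List.getElem_drop]
    have hlen : cnt y r + m < y.length := by rw [List.length_drop] at hm; omega
    have : r ≤ y.getD (cnt y r + m) 0 := (cnt_le_iff hs hlen).1 (by omega)
    rw [List.getD_eq_getElem y 0 hlen] at this
    omega
  omega

lemma getD_take {y : List ℕ} {c m : ℕ} (hm : m < c) (hc : c ≤ y.length) :
    (y.take c).getD m 0 = y.getD m 0 := by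
  have h1 : m < (y.take c).length := by rw [List.length_take]; omega
  rw [List.getD_eq_getElem _ 0 h1, List.getD_eq_getElem y 0 (by omega), List.getElem_take]

lemma getD_append_left {y : List ℕ} {m : ℕ} (a : ℕ) (hm : m < y.length) :
    (y ++ [a]).getD m 0 = y.getD m 0 := by
  have h1 : m < (y ++ [a]).length := by simp; omega
  rw [List.getD_eq_getElem _ 0 h1, List.getD_eq_getElem y 0 hm, List.getElem_append_left]

lemma getD_append_last (y : List ℕ) (a : ℕ) : (y ++ [a]).getD y.length 0 = a := by
  have h1 : y.length < (y ++ [a]).length := by simp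
  rw [List.getD_eq_getElem _ 0 h1]
  simp

lemma sorted_append_le {y : List ℕ} {r : ℕ} (hs : y.Pairwise (· ≤ ·)) (h : ∀ a ∈ y, a ≤ r) :
    (y ++ [r]).Pairwise (· ≤ ·) := by
  apply List.pairwise_append.2
  refine ⟨hs, by simp, ?_⟩
  intro a ha b hb
  simp at hb; subst hb; exact h a ha

lemma sorted_take {y : List ℕ} {c : ℕ} (hs : y.Pairwise (· ≤ ·)) : (y.take c).Pairwise (· ≤ ·) :=
  List.Pairwise.sublist (List.take_sublist c y) hs

lemma getD_mem {y : List ℕ} {i : ℕ} (hi : i < y.length) : y.getD i 0 ∈ y := by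
  rw [List.getD_eq_getElem y 0 hi]; exact List.getElem_mem _

/-- position formula -/
def f1 (n : ℕ) (y : List ℕ) (m : ℕ) : ℕ :=
  if m < y.length then y.getD m 0 + cnt y (y.getD m 0) + cnt y (y.getD m 0 + 1) - m
  else (n - 1 - m) + cnt y (n - 1 - m)

lemma f1_moved {n m : ℕ} {y : List ℕ} (hs : y.Pairwise (· ≤ ·)) (hm : m < y.length) :
    f1 n y m + m = y.getD m 0 + cnt y (y.getD m 0) + cnt y (y.getD m 0 + 1)
    ∧ cnt y (y.getD m 0) ≤ m ∧ m < cnt y (y.getD m 0 + 1) := by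
  have h1 : cnt y (y.getD m 0) ≤ m := (cnt_le_iff hs hm).2 le_rfl
  have h2 : m < cnt y (y.getD m 0 + 1) := (lt_cnt_iff hs hm).2 (by omega)
  refine ⟨?_, h1, h2⟩
  unfold f1
  rw [if_pos hm]
  omega

lemma f1_unmoved {n m : ℕ} {y : List ℕ} (hm : ¬ m < y.length) :
    f1 n y m = (n - 1 - m) + cnt y (n - 1 - m) := by
  unfold f1; rw [if_neg hm]

lemma conj_invol {y z : List ℕ} (hsy : y.Pairwise (· ≤ ·)) (hsz : z.Pairwise (· ≤ ·))
    (hyb : ∀ a ∈ y, a ≤ z.length)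
    (hc : ∀ j < z.length, z.getD j 0 = cnt y (j+1)) :
    ∀ i < y.length, y.getD i 0 = cnt z (i+1) := by
  intro i hi
  set v := y.getD i 0 with hv
  have hvr : v ≤ z.length := hyb _ (getD_mem hi)
  have hupper : cnt z (i+1) ≤ v := by
    rcases eq_or_lt_of_le hvr with h | h
    · rw [h]; exact cnt_le_length _ _
    · rw [cnt_le_iff hsz h, hc v h]
      have : i < cnt y (v+1) := (lt_cnt_iff hsy hi).2 (by omega)
      omega
  have hlower : v ≤ cnt z (i+1) := by
    rcases Nat.eq_zero_or_pos v with h0 | h0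
    · omega
    by_contra hcon
    push_neg at hcon
    have hv1 : v - 1 < z.length := by omega
    have := (cnt_le_iff hsz hv1 (k := i+1)).1 (by omega)
    rw [hc (v-1) hv1] at this
    have h2 : cnt y (v-1+1) ≤ i := (cnt_le_iff hsy hi).2 (by omega)
    omega
  omega

end ORU

namespace ORU
open List

lemma lemA {n r : ℕ} {y : List ℕ} (hs : y.Pairwise (· ≤ ·)) (hb : ∀ a ∈ y, a ≤ r)
    (hsr : y.length + r + 3 ≤ n) {m : ℕ} (hm : m < n) :
    (if f1 n y m ≤ r + cnt y r then f1 n y m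
     else if f1 n y m < n - 1 then f1 n y m + 1 else r + cnt y r + 1)
      = f1 n (y ++ [r]) m := by
  have hsy' : (y ++ [r]).Pairwise (· ≤ ·) := sorted_append_le hs hb
  have hcr_le : cnt y r ≤ y.length := cnt_le_length y r
  have hlen' : (y ++ [r]).length = y.length + 1 := by simp
  rcases lt_trichotomy m y.length with hms | hms | hms
  · -- m < length : moved letter
    obtain ⟨hf, hc1, hc2⟩ := f1_moved (n := n) hs hms
    have hvr : y.getD m 0 ≤ r := hb _ (getD_mem hms)
    have hgetD' : (y ++ [r]).getD m 0 = y.getD m 0 := getD_append_left r hms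
    obtain ⟨hf', hc1', hc2'⟩ := f1_moved (n := n) hsy' (by omega : m < (y ++ [r]).length)
    rw [hgetD', cnt_append1, cnt_append1] at hf'
    rcases eq_or_lt_of_le hvr with hveq | hvlt
    · -- y[m] = r
      rw [hveq] at hf hc1 hf'
      rw [if_neg (by omega), if_pos (by omega)] at hf'
      have hcnt1 : cnt y (r+1) = y.length :=
        cnt_eq_length _ _ (fun a ha => by have := hb a ha; omega)
      have hgt : r + cnt y r < f1 n y m := by omega
      have hlt : f1 n y m < n - 1 := by omega
      rw [if_neg (by omega), if_pos hlt]
      omega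
    · -- y[m] < r
      have h1 : cnt y (y.getD m 0 + 1) ≤ cnt y r := cnt_mono y (by omega)
      have hle : f1 n y m ≤ r + cnt y r := by omega
      rw [if_pos hle]
      rw [if_neg (by omega), if_neg (by omega)] at hf'
      omega
  · -- m = length : newly moved letter
    have hf := f1_unmoved (n := n) (m := m) (y := y) (by omega)
    have hcnt : cnt y (n-1-m) = y.length :=
      cnt_eq_length _ _ (fun a ha => by have := hb a ha; omega)
    have hfv : f1 n y m = n - 1 := by rw [hf, hcnt]; omega
    obtain ⟨hf', hc1', hc2'⟩ := f1_moved (n := n) hsy' (by omega : m < (y++[r]).length)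
    have hgd : (y ++ [r]).getD m 0 = r := by rw [hms]; exact getD_append_last y r
    rw [hgd, cnt_append1, cnt_append1, if_neg (by omega), if_pos (by omega)] at hf'
    have hcnt1 : cnt y (r+1) = y.length :=
      cnt_eq_length _ _ (fun a ha => by have := hb a ha; omega)
    rw [if_neg (by omega), if_neg (by omega)]
    omega
  · -- m > length : unmoved
    have hf := f1_unmoved (n := n) (m := m) (y := y) (by omega)
    have hf' := f1_unmoved (n := n) (m := m) (y := y ++ [r]) (by omega)
    rw [cnt_append1] at hf'
    by_cases hrm : r < n - 1 - m
    · have hcnt : cnt y (n-1-m) = y.length :=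
        cnt_eq_length _ _ (fun a ha => by have := hb a ha; omega)
      rw [if_pos hrm] at hf'
      rw [if_neg (by omega), if_pos (by omega)]
      omega
    · rw [if_neg hrm] at hf'
      have h2 : cnt y (n-1-m) ≤ cnt y r := cnt_mono y (by omega)
      rw [if_pos (by omega)]
      omega

lemma lemB {n r : ℕ} {y : List ℕ} (hs : y.Pairwise (· ≤ ·)) (hb : ∀ a ∈ y, a ≤ r)
    (hsr : y.length + r + 2 = n) {m : ℕ} (hm : m < n) :
    (if f1 n y m ≤ r + cnt y r then f1 n y m
     else if f1 n y m < n - 1 then f1 n y m + 1 else r + cnt y r + 1)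
      = f1 n (y.take (cnt y r)) m := by
  have hcr_le : cnt y r ≤ y.length := cnt_le_length y r
  have hsy' : (y.take (cnt y r)).Pairwise (· ≤ ·) := sorted_take hs
  have hlen' : (y.take (cnt y r)).length = cnt y r := by
    rw [List.length_take]; omega
  rcases lt_trichotomy m y.length with hms | hms | hms
  · -- m < length
    obtain ⟨hf, hc1, hc2⟩ := f1_moved (n := n) hs hms
    have hvr : y.getD m 0 ≤ r := hb _ (getD_mem hms)
    by_cases hmc : m < cnt y r
    · -- kept moved letter, y[m] < r
      have hvlt : y.getD m 0 < r := (lt_cnt_iff hs hms).1 hmc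
      obtain ⟨hf', hc1', hc2'⟩ := f1_moved (n := n) hsy' (by omega : m < (y.take (cnt y r)).length)
      rw [getD_take hmc hcr_le] at hf'
      rw [cnt_take hs (by omega : y.getD m 0 ≤ r), cnt_take hs (by omega : y.getD m 0 + 1 ≤ r)] at hf'
      have h1 : cnt y (y.getD m 0 + 1) ≤ cnt y r := cnt_mono y (by omega)
      have hle : f1 n y m ≤ r + cnt y r := by omega
      rw [if_pos hle]
      omega
    · -- stripped letter, y[m] = r
      have hvge : r ≤ y.getD m 0 := (cnt_le_iff hs hms).1 (by omega)
      have hveq : y.getD m 0 = r := by omega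
      rw [hveq] at hf hc1
      have hcnt1 : cnt y (r+1) = y.length :=
        cnt_eq_length _ _ (fun a ha => by have := hb a ha; omega)
      have hgt : r + cnt y r < f1 n y m := by omega
      have hlt : f1 n y m < n - 1 := by omega
      rw [if_neg (by omega), if_pos hlt]
      have hf' := f1_unmoved (n := n) (m := m) (y := y.take (cnt y r)) (by omega)
      have hcnt' : cnt (y.take (cnt y r)) (n-1-m) = cnt y r := by
        have h := cnt_eq_length (y.take (cnt y r)) (n-1-m) (fun a ha => by
          have ha' : a ∈ y := (List.take_sublist _ _).subset ha
          have := hb a ha'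
          omega)
        rw [hlen'] at h
        exact h
      rw [hcnt'] at hf'
      omega
  · -- m = length
    have hf := f1_unmoved (n := n) (m := m) (y := y) (by omega)
    have hcnt : cnt y (n-1-m) = y.length :=
      cnt_eq_length _ _ (fun a ha => by have := hb a ha; omega)
    have hfv : f1 n y m = n - 1 := by rw [hf, hcnt]; omega
    have hf' := f1_unmoved (n := n) (m := m) (y := y.take (cnt y r)) (by omega)
    have hcnt' : cnt (y.take (cnt y r)) (n-1-m) = cnt y r := by
      have h := cnt_eq_length (y.take (cnt y r)) (n-1-m) (fun a ha => by
        have ha' : a ∈ y := (List.take_sublist _ _).subset ha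
        have := hb a ha'
        omega)
      rw [hlen'] at h
      exact h
    rw [hcnt'] at hf'
    rw [if_neg (by omega), if_neg (by omega)]
    omega
  · -- m > length
    have hf := f1_unmoved (n := n) (m := m) (y := y) (by omega)
    have hf' := f1_unmoved (n := n) (m := m) (y := y.take (cnt y r)) (by omega)
    rw [cnt_take hs (by omega : n - 1 - m ≤ r)] at hf'
    have h2 : cnt y (n-1-m) ≤ cnt y r := cnt_mono y (by omega)
    rw [if_pos (by omega)]
    omega

end ORU

namespace ORU
open List

variable {A : Type*} [Fintype A]

def Conds (n : ℕ) (y z : List ℕ) : Prop :=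
  y.Pairwise (· ≤ ·) ∧ z.Pairwise (· ≤ ·) ∧ (∀ a ∈ y, a ≤ z.length) ∧ (∀ a ∈ z, a ≤ y.length) ∧
  (∀ j < z.length, z.getD j 0 = cnt y (j+1)) ∧
  (y.length + z.length + 2 ≤ n ∨ (y = [] ∧ z = []))

def Phi (P X : RPair A) : Prop :=
  ∃ y z : List ℕ, Conds (Fintype.card A) y z ∧
    ∀ b : A, ((X.p 0) b).val = f1 (Fintype.card A) z (((P.p 1) b).val) ∧
             ((X.p 1) b).val = f1 (Fintype.card A) y (((P.p 0) b).val)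

lemma conds_symm {n : ℕ} {y z : List ℕ} (h : Conds n y z) : Conds n z y := by
  obtain ⟨hsy, hsz, hyb, hzb, hconj, hlen⟩ := h
  refine ⟨hsz, hsy, hzb, hyb, conj_invol hsy hsz hyb hconj, ?_⟩
  rcases hlen with h | ⟨h1, h2⟩
  · left; omega
  · right; exact ⟨h2, h1⟩

def sw (X : RPair A) : RPair A := ⟨fun i => X.p (1 - i)⟩

lemma sw_p (X : RPair A) (i : Fin 2) : (sw X).p i = X.p (1 - i) := rfl

lemma fin2_sub_sub (ε : Fin 2) : 1 - (1 - ε) = ε := by fin_cases ε <;> rfl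

lemma sw_sw (X : RPair A) : sw (sw X) = X := by
  cases X with
  | mk p =>
    unfold sw
    simp only [RPair.mk.injEq]
    funext i
    exact congrArg p (fin2_sub_sub i)

lemma or_sw {P : RPair A} (hor : OrderReversing P) : OrderReversing (sw P) := by
  intro b
  have := hor b
  have h0 : (sw P).p 0 = P.p 1 := rfl
  have h1 : (sw P).p 1 = P.p 0 := rfl
  rw [h0, h1]
  omega

lemma rmove_swap {X Y : RPair A} {ε : Fin 2} (h : Rmove ε X Y) :
    Rmove (1 - ε) (sw X) (sw Y) := by
  obtain ⟨h1, h2⟩ := h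
  constructor
  · show Y.p (1 - (1 - ε)) = X.p (1 - (1 - ε))
    rw [fin2_sub_sub]; exact h1
  · intro z hz b
    have hz' : ((X.p ε) z).val = Fintype.card A - 1 := by
      have : (sw X).p (1 - ε) = X.p ε := by rw [sw_p, fin2_sub_sub]
      rwa [this] at hz
    have := h2 z hz' b
    simp only [sw_p, fin2_sub_sub]
    exact this

lemma phi_swap (P X : RPair A) (h : Phi P X) : Phi (sw P) (sw X) := by
  obtain ⟨y, z, hc, hrows⟩ := h
  refine ⟨z, y, conds_symm hc, ?_⟩
  intro b
  have h0 : ∀ W : RPair A, (sw W).p 0 = W.p 1 := fun _ => rfl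
  have h1 : ∀ W : RPair A, (sw W).p 1 = W.p 0 := fun _ => rfl
  rw [h0, h1, h1, h0]
  exact ⟨(hrows b).2, (hrows b).1⟩

lemma cnt_nil (k : ℕ) : cnt [] k = 0 := rfl

lemma phi_base (P : RPair A) (hor : OrderReversing P) : Phi P P := by
  refine ⟨[], [], ⟨List.Pairwise.nil, List.Pairwise.nil, by simp, by simp, by simp, Or.inr ⟨rfl, rfl⟩⟩, ?_⟩
  intro b
  have h := hor b
  have h0 := ((P.p 0) b).isLt
  have h1 := ((P.p 1) b).isLt
  constructor
  · rw [f1_unmoved (by simp)]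
    rw [cnt_nil]
    omega
  · rw [f1_unmoved (by simp)]
    rw [cnt_nil]
    omega

lemma rpair_ext {X Y : RPair A} (h0 : ∀ b : A, ((X.p 0) b).val = ((Y.p 0) b).val)
    (h1 : ∀ b : A, ((X.p 1) b).val = ((Y.p 1) b).val) : X = Y := by
  cases X with
  | mk px =>
    cases Y with
    | mk py =>
      simp only [RPair.mk.injEq]
      funext i
      fin_cases i
      · exact Equiv.ext fun b => Fin.ext (h0 b)
      · exact Equiv.ext fun b => Fin.ext (h1 b)

lemma phi_std (P Q : RPair A) (hor : OrderReversing P) (hphi : Phi P Q)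
    (hstd : StandardPair Q) : Q = P := by
  obtain ⟨y, z, ⟨hsy, hsz, hyb, hzb, hconj, hlen⟩, hrows⟩ := hphi
  -- first : y = []
  have hy0 : y = [] := by
    by_contra hne
    have hs1 : 1 ≤ y.length := by
      cases y with
      | nil => exact absurd rfl hne
      | cons a l => simp
    have hsr : y.length + z.length + 2 ≤ Fintype.card A := by
      rcases hlen with h | ⟨h1, h2⟩
      · exact h
      · rw [h1] at hs1; simp at hs1
    have hn1 : Fintype.card A - 1 < Fintype.card A := by omega
    set b0 := (P.p 1).symm ⟨Fintype.card A - 1, hn1⟩ with hb0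
    have hP1 : ((P.p 1) b0).val = Fintype.card A - 1 := by rw [hb0]; simp
    have hP0 : ((P.p 0) b0).val = 0 := by have := hor b0; omega
    have hq0 : ((Q.p 0) b0).val = 0 := by
      rw [(hrows b0).1, hP1,
        f1_unmoved (by omega : ¬ (Fintype.card A - 1) < z.length)]
      have e : Fintype.card A - 1 - (Fintype.card A - 1) = 0 := by omega
      rw [e]
      have : cnt z 0 = 0 := cnt_eq_zero _ _ (fun a _ => by omega)
      omega
    have hq1 := hstd.1 b0 hq0
    rw [(hrows b0).2, hP0] at hq1
    obtain ⟨hf, hc1, hc2⟩ := f1_moved (n := Fintype.card A) hsy (by omega : 0 < y.length)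
    have hv : y.getD 0 0 ≤ z.length := hyb _ (getD_mem (by omega))
    have hcnt1 : cnt y (y.getD 0 0 + 1) ≤ y.length := cnt_le_length _ _
    omega
  -- then : z = []
  have hz0 : z = [] := by
    by_contra hne
    have hs1 : 1 ≤ z.length := by
      cases z with
      | nil => exact absurd rfl hne
      | cons a l => simp
    have hsr : y.length + z.length + 2 ≤ Fintype.card A := by
      rcases hlen with h | ⟨h1, h2⟩
      · exact h
      · rw [h2] at hs1; simp at hs1
    have hn1 : Fintype.card A - 1 < Fintype.card A := by omega
    set b1 := (P.p 0).symm ⟨Fintype.card A - 1, hn1⟩ with hb1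
    have hP0 : ((P.p 0) b1).val = Fintype.card A - 1 := by rw [hb1]; simp
    have hP1 : ((P.p 1) b1).val = 0 := by have := hor b1; omega
    have hq1 : ((Q.p 1) b1).val = 0 := by
      rw [(hrows b1).2, hP0,
        f1_unmoved (by omega : ¬ (Fintype.card A - 1) < y.length)]
      have e : Fintype.card A - 1 - (Fintype.card A - 1) = 0 := by omega
      rw [e]
      have : cnt y 0 = 0 := cnt_eq_zero _ _ (fun a _ => by omega)
      omega
    have hq0 := hstd.2 b1 hq1
    rw [(hrows b1).1, hP1] at hq0
    obtain ⟨hf, hc1, hc2⟩ := f1_moved (n := Fintype.card A) hsz (by omega : 0 < z.length)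
    have hv : z.getD 0 0 ≤ y.length := hzb _ (getD_mem (by omega))
    have hcnt1 : cnt z (z.getD 0 0 + 1) ≤ z.length := cnt_le_length _ _
    omega
  subst hy0; subst hz0
  apply rpair_ext
  · intro b
    have h := hor b
    have h0 := ((P.p 0) b).isLt
    have h1 := ((P.p 1) b).isLt
    rw [(hrows b).1, f1_unmoved (by simp), cnt_nil]
    omega
  · intro b
    have h := hor b
    have h0 := ((P.p 0) b).isLt
    have h1 := ((P.p 1) b).isLt
    rw [(hrows b).2, f1_unmoved (by simp), cnt_nil]
    omega

end ORU

namespace ORU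
open List

variable {A : Type*} [Fintype A]

lemma fin2_one_sub_zero : (1 : Fin 2) - 0 = 1 := rfl

lemma phi_step0 (P : RPair A) (hor : OrderReversing P) (X Y : RPair A)
    (hphi : Phi P X) (hm : Rmove 0 X Y) : Phi P Y := by
  obtain ⟨y, z, ⟨hsy, hsz, hyb, hzb, hconj, hlen⟩, hrows⟩ := hphi
  obtain ⟨hY0, hmv⟩ := hm
  by_cases hn1 : Fintype.card A ≤ 1
  · -- degenerate
    refine ⟨[], [], ⟨List.Pairwise.nil, List.Pairwise.nil, by simp, by simp, by simp,
      Or.inr ⟨rfl, rfl⟩⟩, ?_⟩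
    intro b
    have h0 := ((Y.p 0) b).isLt
    have h1 := ((Y.p 1) b).isLt
    have h2 := ((P.p 0) b).isLt
    have h3 := ((P.p 1) b).isLt
    constructor
    · rw [f1_unmoved (by simp), cnt_nil]; omega
    · rw [f1_unmoved (by simp), cnt_nil]; omega
  push_neg at hn1
  have hsr : y.length + z.length + 2 ≤ Fintype.card A := by
    rcases hlen with h | ⟨h1, h2⟩
    · exact h
    · rw [h1, h2]; simp; omega
  have hrn : z.length < Fintype.card A := by omega
  set bz := (P.p 1).symm ⟨z.length, hrn⟩ with hbz
  have hPz : ((P.p 1) bz).val = z.length := by rw [hbz]; simp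
  have hP0z : ((P.p 0) bz).val = Fintype.card A - 1 - z.length := by
    have := hor bz; omega
  have hcntz : cnt z (Fintype.card A - 1 - z.length) = z.length :=
    cnt_eq_length _ _ (fun a ha => by have := hzb a ha; omega)
  have hXz : ((X.p 0) bz).val = Fintype.card A - 1 := by
    rw [(hrows bz).1, hPz, f1_unmoved (by omega : ¬ z.length < z.length)]
    omega
  have hXK : ((X.p 1) bz).val = z.length + cnt y z.length := by
    rw [(hrows bz).2, hP0z,
      f1_unmoved (by omega : ¬ (Fintype.card A - 1 - z.length) < y.length)]
    have e : Fintype.card A - 1 - (Fintype.card A - 1 - z.length) = z.length := by omega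
    rw [e]
  have hY1 : ∀ b : A, ((Y.p 1) b).val =
      if ((X.p 1) b).val ≤ z.length + cnt y z.length then ((X.p 1) b).val
      else if ((X.p 1) b).val < Fintype.card A - 1 then ((X.p 1) b).val + 1
      else z.length + cnt y z.length + 1 := by
    intro b
    have h := hmv bz hXz b
    rw [fin2_one_sub_zero] at h
    rw [h, hXK]
  by_cases hwrap : y.length + z.length + 2 = Fintype.card A
  · -- wrap / strip case
    refine ⟨y.take (cnt y z.length), z, ⟨sorted_take hsy, hsz, ?_, ?_, ?_, Or.inl ?_⟩, ?_⟩
    · intro a ha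
      exact hyb a ((List.take_sublist _ _).subset ha)
    · intro a ha
      obtain ⟨j, hj, rfl⟩ := List.mem_iff_getElem.1 ha
      rw [List.length_take]
      have h1 : z[j] = z.getD j 0 := (List.getD_eq_getElem z 0 hj).symm
      rw [h1, hconj j hj]
      have h2 : cnt y (j+1) ≤ cnt y z.length := cnt_mono y (by omega)
      have h3 : cnt y z.length ≤ y.length := cnt_le_length _ _
      omega
    · intro j hj
      rw [hconj j hj, cnt_take hsy (by omega : j + 1 ≤ z.length)]
    · have : cnt y z.length ≤ y.length := cnt_le_length _ _
      rw [List.length_take]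
      omega
    · intro b
      constructor
      · rw [hY0]; exact (hrows b).1
      · rw [hY1 b, (hrows b).2]
        exact lemB hsy hyb hwrap ((P.p 0) b).isLt
  · -- append case
    have hsr3 : y.length + z.length + 3 ≤ Fintype.card A := by omega
    refine ⟨y ++ [z.length], z, ⟨sorted_append_le hsy hyb, hsz, ?_, ?_, ?_, Or.inl ?_⟩, ?_⟩
    · intro a ha
      rcases List.mem_append.1 ha with h | h
      · exact hyb a h
      · simp at h; omega
    · intro a ha
      have := hzb a ha
      simp
      omega
    · intro j hj
      rw [hconj j hj, cnt_append1, if_neg (by omega)]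
      omega
    · simp; omega
    · intro b
      constructor
      · rw [hY0]; exact (hrows b).1
      · rw [hY1 b, (hrows b).2]
        exact lemA hsy hyb hsr3 ((P.p 0) b).isLt

lemma phi_step (P : RPair A) (hor : OrderReversing P) (X Y : RPair A) (ε : Fin 2)
    (hphi : Phi P X) (hm : Rmove ε X Y) : Phi P Y := by
  fin_cases ε
  · exact phi_step0 P hor X Y hphi hm
  · have h1 : Rmove 0 (sw X) (sw Y) := by
      have := rmove_swap hm
      simpa using this
    have h2 := phi_step0 (sw P) (or_sw hor) (sw X) (sw Y) (phi_swap P X hphi) h1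
    have h3 := phi_swap (sw P) (sw Y) h2
    rwa [sw_sw, sw_sw] at h3

end ORU


/-- An order reversing pair is the only standard pair in its Rauzy class. -/
theorem order_reversing_unique_standard
    {A : Type*} [Fintype A] (P : RPair A) (hP : IrreduciblePair P)
    (hor : OrderReversing P) :
    ∀ Q : RPair A, InRauzyClass P Q → StandardPair Q → Q = P := by
  intro Q hclass
  have hphi : ORU.Phi P Q := by
    induction hclass with
    | refl => exact ORU.phi_base P hor
    | tail h step ih =>
      obtain ⟨ε, hmv⟩ := step
      exact ORU.phi_step P hor _ _ ε ih hmv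
  intro hstd
  exact ORU.phi_std P Q hor hphi hstd
end
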